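/- arXiv:1812.07528 — 3 statements merged into one kernel-verified Lean document; each statement's English description precedes it below -/
import Mathlib

section
/- Let α > 1, ξ > 0, r > 0, and θ ∈ (0, π). Define J(ξ + re^{iθ}, ξ) = i r^{(3α/2)-1} ∫_{-θ}^{θ} (e^{iφ} - e^{iθ})^α (e^{iφ} - e^{-iθ})^{α-2} (ξ + re^{iφ})^{-α/2} e^{iφ(1 - α/2)} dφ. Then there is a constant C = C(α), independent of r, θ, ξ, such that |J(ξ + re^{iθ}, ξ)| ≤ C r^{α-1}. -/
open Real Complex Set MeasureTheory intervalIntegral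

private lemma Jb_exp_sub_exp_I (x : ℂ) :
    Complex.exp (x * Complex.I) - Complex.exp (-x * Complex.I) = 2 * Complex.I * Complex.sin x := by
  rw [Complex.sin]; field_simp; ring_nf; simp [Complex.I_sq]; ring

private lemma Jb_abs_exp_sub_exp (a b : ℝ) :
    ‖Complex.exp (a * Complex.I) - Complex.exp (b * Complex.I)‖
      = 2 * |Real.sin ((a - b) / 2)| := by
  have key : Complex.exp ((a:ℂ) * Complex.I) - Complex.exp ((b:ℂ) * Complex.I)
      = Complex.exp ((((a+b)/2 : ℝ) : ℂ) * Complex.I) *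
        (2 * Complex.I * Complex.sin ((((a-b)/2 : ℝ) : ℂ))) := by
    rw [← Jb_exp_sub_exp_I, mul_sub, ← Complex.exp_add, ← Complex.exp_add]
    push_cast
    ring_nf
  rw [key, norm_mul, Complex.norm_exp_ofReal_mul_I, one_mul, norm_mul, norm_mul,
    Complex.norm_two, Complex.norm_I, mul_one, ← Complex.ofReal_sin, Complex.norm_real, Real.norm_eq_abs]

private lemma Jb_abs_lower (ξ r φ : ℝ) (hξ : 0 < ξ) (hr : 0 < r) :
    r * |Real.cos (φ/2)| ≤ ‖(ξ : ℂ) + r * Complex.exp (φ * Complex.I)‖ := by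
  have h2 : (r * |Real.cos (φ/2)|)^2 ≤ (‖(ξ : ℂ) + r * Complex.exp (φ * Complex.I)‖)^2 := by
    rw [Complex.sq_norm, Complex.normSq_apply]
    simp only [Complex.add_re, Complex.add_im, Complex.ofReal_re, Complex.ofReal_im,
      Complex.mul_re, Complex.mul_im, Complex.exp_ofReal_mul_I_re, Complex.exp_ofReal_mul_I_im]
    have hc : Real.cos φ = 2 * Real.cos (φ/2)^2 - 1 := by
      have := Real.cos_sq (φ/2)
      rw [show 2 * (φ/2) = φ by ring] at this
      linarith
    have hs : Real.sin φ ^2 = 1 - Real.cos φ ^2 := Real.sin_sq φ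
    have habs : |Real.cos (φ/2)|^2 = Real.cos (φ/2)^2 := sq_abs _
    have h2' : Real.cos φ ≤ 1 := Real.cos_le_one φ
    rcases le_or_gt 0 (Real.cos φ) with hcp | hcn
    · nlinarith [mul_nonneg (mul_nonneg hξ.le hr.le) hcp, sq_nonneg ξ, sq_nonneg (Real.sin φ),
        mul_nonneg (sq_nonneg r) (by linarith : (0:ℝ) ≤ 1 - Real.cos φ)]
    · have h1 : (-1:ℝ) ≤ Real.cos φ := Real.neg_one_le_cos φ
      nlinarith [sq_nonneg (ξ + r * Real.cos φ), sq_nonneg (Real.sin φ),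
        mul_nonneg (mul_nonneg (sq_nonneg r) (by linarith : (0:ℝ) ≤ 1 + Real.cos φ))
          (by linarith : (0:ℝ) ≤ 1 - 2 * Real.cos φ)]
  exact le_of_pow_le_pow_left₀ two_ne_zero (norm_nonneg _) h2

private lemma Jb_sin_lower (x : ℝ) (h0 : 0 ≤ x) (h1 : x ≤ π) :
    2/π^2 * (x*(π-x)) ≤ Real.sin x := by
  have hπ := Real.pi_pos
  rcases le_or_gt x (π/2) with h | h
  · refine le_trans ?_ (Real.mul_le_sin h0 h)
    rw [div_mul_eq_mul_div, div_mul_eq_mul_div, div_le_div_iff₀ (by positivity) hπ]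
    nlinarith [mul_nonneg (mul_nonneg h0 h0) hπ.le]
  · have h0' : 0 ≤ π - x := by linarith
    have hkey := Real.mul_le_sin h0' (by linarith : π - x ≤ π/2)
    rw [Real.sin_pi_sub] at hkey
    refine le_trans ?_ hkey
    rw [div_mul_eq_mul_div, div_mul_eq_mul_div, div_le_div_iff₀ (by positivity) hπ]
    nlinarith [mul_nonneg (mul_nonneg h0' h0') hπ.le]

private lemma Jb_sin_upper (x : ℝ) (h0 : 0 ≤ x) (h1 : x ≤ π) :
    Real.sin x ≤ 2/π * (x*(π-x)) := by
  have hπ := Real.pi_pos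
  rcases le_or_gt x (π/2) with h | h
  · refine le_trans (Real.sin_le h0) ?_
    rw [div_mul_eq_mul_div, le_div_iff₀ hπ]
    nlinarith [mul_nonneg h0 (by linarith : (0:ℝ) ≤ π - 2*x)]
  · have h0' : 0 ≤ π - x := by linarith
    have : Real.sin x ≤ π - x := by
      rw [← Real.sin_pi_sub]; exact Real.sin_le h0'
    refine le_trans this ?_
    rw [div_mul_eq_mul_div, le_div_iff₀ hπ]
    nlinarith [mul_nonneg h0' (by linarith : (0:ℝ) ≤ 2*x - π)]

private lemma Jb_rpow_sandwich {a b P x : ℝ} (e : ℝ) (ha : 0 < a) (hP : 0 < P)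
    (hx1 : a*P ≤ x) (hx2 : x ≤ b*P) : x^e ≤ (a^e + b^e) * P^e := by
  have hx : 0 < x := lt_of_lt_of_le (by positivity) hx1
  have hb : 0 < b := by
    by_contra h
    push_neg at h
    nlinarith
  rcases le_or_gt 0 e with he | he
  · calc x^e ≤ (b*P)^e := Real.rpow_le_rpow hx.le hx2 he
      _ = b^e * P^e := Real.mul_rpow hb.le hP.le
      _ ≤ (a^e+b^e) * P^e := by
          have h1 := Real.rpow_pos_of_pos ha e
          have h2 := Real.rpow_pos_of_pos hP e
          nlinarith
  · calc x^e ≤ (a*P)^e := Real.rpow_le_rpow_of_nonpos (by positivity) hx1 he.le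
      _ = a^e * P^e := Real.mul_rpow ha.le hP.le
      _ ≤ (a^e+b^e) * P^e := by
          have h1 := Real.rpow_pos_of_pos hb e
          have h2 := Real.rpow_pos_of_pos hP e
          nlinarith

private lemma Jb_mul3_le {a a' b b' c c' : ℝ} (ha : a ≤ a') (hb : b ≤ b') (hc : c ≤ c')
    (hb0 : 0 ≤ b) (hc0 : 0 ≤ c) (ha'0 : 0 ≤ a') (hb'0 : 0 ≤ b') : a*b*c ≤ a'*b'*c' :=
  mul_le_mul (mul_le_mul ha hb hb0 ha'0) hc hc0 (by positivity)

set_option maxHeartbeats 1000000 in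
private lemma Jb_core (α : ℝ) (hα : 1 < α) : ∃ K > 0, ∀ δ w : ℝ, 0 < δ → δ < w → w + δ < π →
    ((w-δ)*(π-w+δ))^α * ((π-w-δ)*(w+δ))^(α-2) * (w*(π-w))^(-(α/2))
      ≤ K * ((π-w-δ)^(α-2) + w^(3*α/2-2)) := by
  have hπ := Real.pi_pos
  obtain ⟨KA, hKApos, hKAdef⟩ : ∃ KA : ℝ, 0 < KA ∧ KA = 2^α * (π^2/4)^(α/2) * (2*π)^(α-2) :=
    ⟨_, by positivity, rfl⟩
  obtain ⟨KB, hKBpos, hKBdef⟩ : ∃ KB : ℝ, 0 < KB ∧ KB = 2^α * π^(α/2) := ⟨_, by positivity, rfl⟩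
  obtain ⟨c1, hc1pos, hc1def⟩ : ∃ c : ℝ, 0 < c ∧ c = KB*(π/4)^(α-2) :=
    ⟨_, by positivity, rfl⟩
  obtain ⟨c2, hc2pos, hc2def⟩ : ∃ c : ℝ, 0 < c ∧ c = KB*((π/4)^(3*α/2-2)+π^(3*α/2-2)) :=
    ⟨_, by positivity, rfl⟩
  refine ⟨KA + c1 + c2, by positivity, fun δ w hδ hδw hwδ => ?_⟩
  set K : ℝ := KA + c1 + c2 with hK
  have hKA_le : KA ≤ K := by linarith
  have hc1_le : c1 ≤ K := by linarith
  have hc2_le : c2 ≤ K := by linarith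
  have hKpos : 0 < K := by linarith
  have hw : 0 < w := hδ.trans hδw
  have hs : 0 < w - δ := by linarith
  have hv : 0 < π - w := by linarith
  have ht : 0 < π - w - δ := by linarith
  have hwπ : w < π := by linarith
  have hα0 : (0:ℝ) ≤ α := by linarith
  have hwv : (0:ℝ) < w*(π-w) := by positivity
  have h1 : ((w-δ)*(π-w+δ))^α ≤ 2^α * (w*(π-w))^α := by
    rw [← Real.mul_rpow (by norm_num) hwv.le]
    apply Real.rpow_le_rpow (by positivity) ?_ hα0
    nlinarith
  have h2 : (w*(π-w))^α * (w*(π-w))^(-(α/2)) = (w*(π-w))^(α/2) := by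
    rw [← Real.rpow_add hwv]; ring_nf
  have hPt : 0 < (π-w-δ)*(w+δ) := by positivity
  have hPtnn : (0:ℝ) ≤ ((π-w-δ)*(w+δ))^(α-2) := by positivity
  have main : ((w-δ)*(π-w+δ))^α * ((π-w-δ)*(w+δ))^(α-2) * (w*(π-w))^(-(α/2))
      ≤ 2^α * (w*(π-w))^(α/2) * ((π-w-δ)*(w+δ))^(α-2) := by
    calc ((w-δ)*(π-w+δ))^α * ((π-w-δ)*(w+δ))^(α-2) * (w*(π-w))^(-(α/2))
        ≤ (2^α * (w*(π-w))^α) * ((π-w-δ)*(w+δ))^(α-2) * (w*(π-w))^(-(α/2)) := by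
          apply mul_le_mul_of_nonneg_right ?_ (by positivity)
          exact mul_le_mul_of_nonneg_right h1 hPtnn
      _ = 2^α * ((w*(π-w))^α * (w*(π-w))^(-(α/2))) * ((π-w-δ)*(w+δ))^(α-2) := by ring
      _ = 2^α * (w*(π-w))^(α/2) * ((π-w-δ)*(w+δ))^(α-2) := by rw [h2]
  have htnn : (0:ℝ) ≤ (π-w-δ)^(α-2) := by positivity
  have hwnn : (0:ℝ) ≤ w^(3*α/2-2) := by positivity
  rcases le_or_gt 2 α with hα2 | hα2
  · have hb1 : ((π-w-δ)*(w+δ))^(α-2) ≤ (2*π)^(α-2) * (π-w-δ)^(α-2) := by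
      rw [← Real.mul_rpow (by positivity) ht.le]
      apply Real.rpow_le_rpow hPt.le (by nlinarith) (by linarith)
    have hb2 : (w*(π-w))^(α/2) ≤ (π^2/4)^(α/2) := by
      apply Real.rpow_le_rpow hwv.le (by nlinarith [sq_nonneg (w - (π-w))]) (by positivity)
    calc ((w-δ)*(π-w+δ))^α * ((π-w-δ)*(w+δ))^(α-2) * (w*(π-w))^(-(α/2))
        ≤ 2^α * (w*(π-w))^(α/2) * ((π-w-δ)*(w+δ))^(α-2) := main
      _ ≤ 2^α * (π^2/4)^(α/2) * ((2*π)^(α-2) * (π-w-δ)^(α-2)) := by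
          apply mul_le_mul (mul_le_mul_of_nonneg_left hb2 (by positivity)) hb1 hPtnn (by positivity)
      _ = KA * (π-w-δ)^(α-2) := by rw [hKAdef]; ring
      _ ≤ K * (π-w-δ)^(α-2) := mul_le_mul_of_nonneg_right hKA_le htnn
      _ ≤ K * ((π-w-δ)^(α-2) + w^(3*α/2-2)) := by
          apply mul_le_mul_of_nonneg_left (by linarith) hKpos.le
  · have he : α - 2 ≤ 0 := by linarith
    have hb1 : ((π-w-δ)*(w+δ))^(α-2) ≤ (π-w-δ)^(α-2) * w^(α-2) := by
      rw [← Real.mul_rpow ht.le hw.le]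
      apply Real.rpow_le_rpow_of_nonpos (by positivity)
        (mul_le_mul_of_nonneg_left (by linarith) ht.le) he
    have hb2 : (w*(π-w))^(α/2) ≤ π^(α/2) * w^(α/2) := by
      rw [← Real.mul_rpow hπ.le hw.le]
      have h' : w*(π-w) ≤ π*w := by
        rw [mul_comm w (π-w)]
        exact mul_le_mul_of_nonneg_right (by linarith) hw.le
      exact Real.rpow_le_rpow hwv.le h' (by positivity)
    have main2 : ((w-δ)*(π-w+δ))^α * ((π-w-δ)*(w+δ))^(α-2) * (w*(π-w))^(-(α/2))
        ≤ KB * ((π-w-δ)^(α-2) * w^(3*α/2-2)) := by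
      calc ((w-δ)*(π-w+δ))^α * ((π-w-δ)*(w+δ))^(α-2) * (w*(π-w))^(-(α/2))
          ≤ 2^α * (w*(π-w))^(α/2) * ((π-w-δ)*(w+δ))^(α-2) := main
        _ ≤ 2^α * (π^(α/2) * w^(α/2)) * ((π-w-δ)^(α-2) * w^(α-2)) := by
            apply mul_le_mul (mul_le_mul_of_nonneg_left hb2 (by positivity)) hb1 hPtnn (by positivity)
        _ = KB * ((π-w-δ)^(α-2) * (w^(α/2) * w^(α-2))) := by rw [hKBdef]; ring
        _ = KB * ((π-w-δ)^(α-2) * w^(3*α/2-2)) := by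
            rw [← Real.rpow_add hw]; ring_nf
    rcases le_or_gt (π/4) (π-w-δ) with htb | htb
    · have hb3 : (π-w-δ)^(α-2) ≤ (π/4)^(α-2) :=
        Real.rpow_le_rpow_of_nonpos (by positivity) htb he
      calc ((w-δ)*(π-w+δ))^α * ((π-w-δ)*(w+δ))^(α-2) * (w*(π-w))^(-(α/2))
          ≤ KB * ((π-w-δ)^(α-2) * w^(3*α/2-2)) := main2
        _ ≤ KB * ((π/4)^(α-2) * w^(3*α/2-2)) :=
            mul_le_mul_of_nonneg_left (mul_le_mul_of_nonneg_right hb3 hwnn) hKBpos.le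
        _ = c1 * w^(3*α/2-2) := by rw [hc1def]; ring
        _ ≤ K * w^(3*α/2-2) := mul_le_mul_of_nonneg_right hc1_le hwnn
        _ ≤ K * ((π-w-δ)^(α-2) + w^(3*α/2-2)) := by
            apply mul_le_mul_of_nonneg_left (by linarith) hKpos.le
    · have hwb : π/4 ≤ w := by nlinarith
      have hb4 : w^(3*α/2-2) ≤ (π/4)^(3*α/2-2) + π^(3*α/2-2) := by
        rcases le_or_gt 0 (3*α/2-2) with hE | hE
        · refine le_trans (Real.rpow_le_rpow hw.le hwπ.le hE) ?_
          nlinarith [Real.rpow_pos_of_pos (by positivity : (0:ℝ) < π/4) (3*α/2-2)]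
        · refine le_trans (Real.rpow_le_rpow_of_nonpos (by positivity) hwb hE.le) ?_
          nlinarith [Real.rpow_pos_of_pos hπ (3*α/2-2)]
      calc ((w-δ)*(π-w+δ))^α * ((π-w-δ)*(w+δ))^(α-2) * (w*(π-w))^(-(α/2))
          ≤ KB * ((π-w-δ)^(α-2) * w^(3*α/2-2)) := main2
        _ ≤ KB * ((π-w-δ)^(α-2) * ((π/4)^(3*α/2-2) + π^(3*α/2-2))) :=
            mul_le_mul_of_nonneg_left (mul_le_mul_of_nonneg_left hb4 htnn) hKBpos.le
        _ = c2 * (π-w-δ)^(α-2) := by rw [hc2def]; ring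
        _ ≤ K * (π-w-δ)^(α-2) := mul_le_mul_of_nonneg_right hc2_le htnn
        _ ≤ K * ((π-w-δ)^(α-2) + w^(3*α/2-2)) := by
            apply mul_le_mul_of_nonneg_left (by linarith) hKpos.le

set_option maxHeartbeats 1000000 in
private lemma Jb_pointwise (α : ℝ) (hα : 1 < α) :
    ∃ CK > 0, ∀ r θ ξ φ : ℝ, 0 < r → θ ∈ Set.Ioo 0 π → 0 < ξ → φ ∈ Set.Ioo (-θ) θ →
      ‖(Complex.exp (φ * Complex.I) - Complex.exp (θ * Complex.I)) ^ (α : ℂ) *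
          (Complex.exp (φ * Complex.I) - Complex.exp (-θ * Complex.I)) ^ ((α : ℂ) - 2) *
          ((ξ : ℂ) + r * Complex.exp (φ * Complex.I)) ^ (-(α : ℂ) / 2) *
          Complex.exp (φ * Complex.I * (1 - α / 2))‖
        ≤ CK * r^(-(α/2)) * ((2⁻¹*(θ+φ))^(α-2) + (2⁻¹*(π-φ))^(3*α/2-2)) := by
  have hπ := Real.pi_pos
  obtain ⟨K, hKpos, hcore⟩ := Jb_core α hα
  obtain ⟨C0, hC0pos, hC0def⟩ : ∃ c : ℝ, 0 < c ∧
      c = (4/π)^α * ((4/π^2)^(α-2)+(4/π)^(α-2)) * (2/π^2)^(-(α/2)) := ⟨_, by positivity, rfl⟩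
  refine ⟨C0*K, by positivity, fun r θ ξ φ hr hθ hξ hφ => ?_⟩
  obtain ⟨hθ0, hθπ⟩ := hθ
  obtain ⟨hφl, hφu⟩ := hφ
  have hα0 : (0:ℝ) ≤ α := by linarith
  set δ := (π-θ)/2 with hδdef
  set w := (π-φ)/2 with hwdef
  have hδ0 : 0 < δ := by rw [hδdef]; linarith
  have hδw : δ < w := by rw [hδdef, hwdef]; linarith
  have hwδ : w + δ < π := by rw [hδdef, hwdef]; linarith
  have hw0 : 0 < w := hδ0.trans hδw
  have hs0 : 0 < w - δ := by linarith
  have hsπ : w - δ < π := by linarith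
  have ht0 : 0 < π - w - δ := by linarith
  have htπ : π - w - δ < π := by linarith
  have hwπ : w < π := by linarith
  have hsinS : 0 < Real.sin (w - δ) := Real.sin_pos_of_pos_of_lt_pi hs0 hsπ
  have hsinT : 0 < Real.sin (π - w - δ) := Real.sin_pos_of_pos_of_lt_pi ht0 htπ
  have hsinW : 0 < Real.sin w := Real.sin_pos_of_pos_of_lt_pi hw0 hwπ
  -- abs of the first factor base
  have hA : ‖Complex.exp (φ * Complex.I) - Complex.exp (θ * Complex.I)‖
      = 2 * Real.sin (w - δ) := by
    rw [Jb_abs_exp_sub_exp φ θ, show (φ - θ)/2 = -(w - δ) by rw [hwdef, hδdef]; ring,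
      Real.sin_neg, abs_neg, abs_of_pos hsinS]
  have hB : ‖Complex.exp (φ * Complex.I) - Complex.exp (-θ * Complex.I)‖
      = 2 * Real.sin (π - w - δ) := by
    have hcast : (-(θ:ℂ)) * Complex.I = (((-θ : ℝ)):ℂ) * Complex.I := by push_cast; ring
    rw [show -(θ:ℂ) * Complex.I = (((-θ : ℝ)):ℂ) * Complex.I from hcast,
      Jb_abs_exp_sub_exp φ (-θ), show (φ - -θ)/2 = π - w - δ by rw [hwdef, hδdef]; ring,
      abs_of_pos hsinT]
  have hAne : Complex.exp (φ * Complex.I) - Complex.exp (θ * Complex.I) ≠ 0 := by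
    intro h
    rw [h, norm_zero] at hA
    linarith
  have hBne : Complex.exp (φ * Complex.I) - Complex.exp (-θ * Complex.I) ≠ 0 := by
    intro h
    rw [h, norm_zero] at hB
    linarith
  -- lower bound for the third factor base
  have hCabs : r * Real.sin w ≤ ‖(ξ : ℂ) + r * Complex.exp (φ * Complex.I)‖ := by
    have hcos : Real.cos (φ/2) = Real.sin w := by
      rw [hwdef, show (π-φ)/2 = π/2 - φ/2 by ring, Real.sin_pi_div_two_sub]
    have := Jb_abs_lower ξ r φ hξ hr
    rwa [hcos, abs_of_pos hsinW] at this
  have hCpos : (0:ℝ) < ‖(ξ : ℂ) + r * Complex.exp (φ * Complex.I)‖ :=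
    lt_of_lt_of_le (by positivity) hCabs
  have hCne : ((ξ : ℂ) + r * Complex.exp (φ * Complex.I)) ≠ 0 := by
    intro h
    rw [h, norm_zero] at hCpos
    exact lt_irrefl 0 hCpos
  -- abs of the exponential factor
  have hE : ‖Complex.exp (φ * Complex.I * (1 - α / 2))‖ = 1 := by
    have h1 : (φ:ℂ) * Complex.I * (1 - (α:ℂ) / 2) = ((φ*(1-α/2) : ℝ):ℂ) * Complex.I := by
      push_cast; ring
    rw [h1, Complex.norm_exp_ofReal_mul_I]
  -- rewrite exponents as real coercions
  have e2 : (α:ℂ) - 2 = ((α - 2 : ℝ):ℂ) := by push_cast; ring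
  have e3 : -(α:ℂ) / 2 = ((-(α/2) : ℝ):ℂ) := by push_cast; ring
  -- norm of the integrand
  have hnorm : ‖(Complex.exp (φ * Complex.I) - Complex.exp (θ * Complex.I)) ^ (α : ℂ) *
          (Complex.exp (φ * Complex.I) - Complex.exp (-θ * Complex.I)) ^ ((α : ℂ) - 2) *
          ((ξ : ℂ) + r * Complex.exp (φ * Complex.I)) ^ (-(α : ℂ) / 2) *
          Complex.exp (φ * Complex.I * (1 - α / 2))‖
      = (2 * Real.sin (w - δ))^α * (2 * Real.sin (π - w - δ))^(α-2) *
          (‖(ξ : ℂ) + r * Complex.exp (φ * Complex.I)‖)^(-(α/2)) := by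
    rw [norm_mul, norm_mul, norm_mul, hE, mul_one, e2, e3,
      Complex.norm_cpow_of_ne_zero hAne, Complex.norm_cpow_of_ne_zero hBne,
      Complex.norm_cpow_of_ne_zero hCne]
    simp only [Complex.ofReal_re, Complex.ofReal_im, mul_zero, Real.exp_zero, div_one]
    rw [hA, hB]
  rw [hnorm]
  -- bound each factor
  have hF3a : (‖(ξ : ℂ) + r * Complex.exp (φ * Complex.I)‖)^(-(α/2))
      ≤ (r * Real.sin w)^(-(α/2)) :=
    Real.rpow_le_rpow_of_nonpos (by positivity) hCabs (by linarith)
  have hF1 : (2 * Real.sin (w - δ))^α ≤ (4/π)^α * ((w-δ)*(π-w+δ))^α := by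
    have hup : 2 * Real.sin (w - δ) ≤ 4/π * ((w-δ)*(π-w+δ)) := by
      have h := Jb_sin_upper (w-δ) hs0.le hsπ.le
      have heq : (w-δ)*(π-(w-δ)) = (w-δ)*(π-w+δ) := by ring
      rw [heq] at h
      calc 2 * Real.sin (w-δ) ≤ 2 * (2/π * ((w-δ)*(π-w+δ))) := by linarith
        _ = 4/π * ((w-δ)*(π-w+δ)) := by ring
    calc (2 * Real.sin (w - δ))^α ≤ (4/π * ((w-δ)*(π-w+δ)))^α :=
          Real.rpow_le_rpow (by positivity) hup hα0
      _ = (4/π)^α * ((w-δ)*(π-w+δ))^α := Real.mul_rpow (by positivity) (by nlinarith)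
  have hF2 : (2 * Real.sin (π - w - δ))^(α-2)
      ≤ ((4/π^2)^(α-2)+(4/π)^(α-2)) * ((π-w-δ)*(w+δ))^(α-2) := by
    apply Jb_rpow_sandwich (α-2) (by positivity) (mul_pos ht0 (by linarith))
    · have h := Jb_sin_lower (π-w-δ) ht0.le htπ.le
      have heq : (π-w-δ)*(π-(π-w-δ)) = (π-w-δ)*(w+δ) := by ring
      rw [heq] at h
      have h2 : 4/π^2 * ((π-w-δ)*(w+δ)) = 2 * (2/π^2 * ((π-w-δ)*(w+δ))) := by ring
      linarith
    · have h := Jb_sin_upper (π-w-δ) ht0.le htπ.le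
      have heq : (π-w-δ)*(π-(π-w-δ)) = (π-w-δ)*(w+δ) := by ring
      rw [heq] at h
      have h2 : 4/π * ((π-w-δ)*(w+δ)) = 2 * (2/π * ((π-w-δ)*(w+δ))) := by ring
      linarith
  have hF3 : (r * Real.sin w)^(-(α/2))
      ≤ (2/π^2)^(-(α/2)) * (r*(w*(π-w)))^(-(α/2)) := by
    have hlow : 2/π^2 * (r*(w*(π-w))) ≤ r * Real.sin w := by
      have h := Jb_sin_lower w hw0.le hwπ.le
      calc 2/π^2 * (r*(w*(π-w))) = r * (2/π^2 * (w*(π-w))) := by ring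
        _ ≤ r * Real.sin w := mul_le_mul_of_nonneg_left h hr.le
    have hq : (0:ℝ) < r*(w*(π-w)) := mul_pos hr (mul_pos hw0 (by linarith))
    calc (r * Real.sin w)^(-(α/2)) ≤ (2/π^2 * (r*(w*(π-w))))^(-(α/2)) :=
          Real.rpow_le_rpow_of_nonpos (mul_pos (by positivity) hq) hlow (by linarith)
      _ = (2/π^2)^(-(α/2)) * (r*(w*(π-w)))^(-(α/2)) :=
          Real.mul_rpow (by positivity) hq.le
  have step1 : (2 * Real.sin (w - δ))^α * (2 * Real.sin (π - w - δ))^(α-2) *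
        (‖(ξ : ℂ) + r * Complex.exp (φ * Complex.I)‖)^(-(α/2))
      ≤ ((4/π)^α * ((w-δ)*(π-w+δ))^α) * (((4/π^2)^(α-2)+(4/π)^(α-2)) * ((π-w-δ)*(w+δ))^(α-2)) *
        ((2/π^2)^(-(α/2)) * (r*(w*(π-w)))^(-(α/2))) := by
    apply Jb_mul3_le hF1 hF2 (le_trans hF3a hF3)
    · exact Real.rpow_nonneg (by linarith) _
    · exact Real.rpow_nonneg (norm_nonneg _) _
    · exact mul_nonneg (Real.rpow_nonneg (by positivity) _)
        (Real.rpow_nonneg (mul_nonneg hs0.le (by linarith)) _)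
    · exact mul_nonneg (by positivity)
        (Real.rpow_nonneg (mul_nonneg ht0.le (by linarith)) _)
  refine le_trans step1 ?_
  have hsplit : (r*(w*(π-w)))^(-(α/2)) = r^(-(α/2)) * (w*(π-w))^(-(α/2)) :=
    Real.mul_rpow hr.le (mul_nonneg hw0.le (by linarith))
  have hcoreval := hcore δ w hδ0 hδw hwδ
  calc ((4/π)^α * ((w-δ)*(π-w+δ))^α) * (((4/π^2)^(α-2)+(4/π)^(α-2)) * ((π-w-δ)*(w+δ))^(α-2)) *
        ((2/π^2)^(-(α/2)) * (r*(w*(π-w)))^(-(α/2)))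
      = C0 * (((w-δ)*(π-w+δ))^α * ((π-w-δ)*(w+δ))^(α-2) * (w*(π-w))^(-(α/2))) * r^(-(α/2)) := by
        rw [hsplit, hC0def]; ring
    _ ≤ C0 * (K * ((π-w-δ)^(α-2) + w^(3*α/2-2))) * r^(-(α/2)) := by
        apply mul_le_mul_of_nonneg_right (mul_le_mul_of_nonneg_left hcoreval hC0pos.le)
          (Real.rpow_nonneg hr.le _)
    _ = C0 * K * r^(-(α/2)) * ((2⁻¹*(θ+φ))^(α-2) + (2⁻¹*(π-φ))^(3*α/2-2)) := by
        rw [show π - w - δ = 2⁻¹*(θ+φ) by rw [hwdef, hδdef]; ring,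
          show w = 2⁻¹*(π-φ) from by rw [hwdef]; ring]
        ring

set_option maxHeartbeats 1000000 in
/-- Bound on the circular-arc parametrization of `J(ξ + re^{iθ}, ξ)`: for `α > 1`
there is `C = C(α) > 0`, independent of `r, θ, ξ`, with `|J(ξ + re^{iθ}, ξ)| ≤ C r^{α-1}`. -/
theorem J_bound_circular (α : ℝ) (hα : 1 < α) :
    ∃ C > 0, ∀ r θ ξ : ℝ, 0 < r → θ ∈ Set.Ioo 0 Real.pi → 0 < ξ →
      ‖(Complex.I * (r : ℂ) ^ ((3 * α / 2 - 1 : ℝ) : ℂ) *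
        ∫ φ in (-θ)..θ,
          (Complex.exp (φ * Complex.I) - Complex.exp (θ * Complex.I)) ^ (α : ℂ) *
          (Complex.exp (φ * Complex.I) - Complex.exp (-θ * Complex.I)) ^ ((α : ℂ) - 2) *
          ((ξ : ℂ) + r * Complex.exp (φ * Complex.I)) ^ (-(α : ℂ) / 2) *
          Complex.exp (φ * Complex.I * (1 - α / 2)))‖ ≤ C * r ^ (α - 1) := by
  have hπ := Real.pi_pos
  have hα1 : (0:ℝ) < α - 1 := by linarith
  have hq1 : (0:ℝ) < 3*α/2 - 1 := by linarith
  have hp : (-1:ℝ) < α - 2 := by linarith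
  have hq : (-1:ℝ) < 3*α/2 - 2 := by linarith
  obtain ⟨CK, hCKpos, hpw⟩ := Jb_pointwise α hα
  obtain ⟨Ib, hIbpos, hIbdef⟩ : ∃ c : ℝ, 0 < c ∧
      c = 2*π^(α-1)/(α-1) + 2*π^(3*α/2-1)/(3*α/2-1) := by
    refine ⟨_, ?_, rfl⟩
    have := Real.rpow_pos_of_pos hπ (α-1)
    have := Real.rpow_pos_of_pos hπ (3*α/2-1)
    positivity
  refine ⟨CK * Ib, by positivity, fun r θ ξ hr hθ hξ => ?_⟩
  obtain ⟨hθ0, hθπ⟩ := hθ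
  -- integrability of the two majorant pieces
  have hint1 : IntervalIntegrable (fun φ : ℝ => (2⁻¹*(θ+φ))^(α-2)) volume (-θ) θ := by
    have h := ((intervalIntegral.intervalIntegrable_rpow' hp (a := 0) (b := θ)).comp_mul_left
      (c := 2⁻¹) enorm_ne_top enorm_ne_top).comp_add_left θ
    rw [show (0:ℝ)/2⁻¹ - θ = -θ by norm_num, show θ/2⁻¹ - θ = θ by field_simp; ring] at h
    exact h
  have hint2 : IntervalIntegrable (fun φ : ℝ => (2⁻¹*(π-φ))^(3*α/2-2)) volume (-θ) θ := by
    have h := ((intervalIntegral.intervalIntegrable_rpow' hq (a := (π+θ)/2)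
      (b := (π-θ)/2)).comp_mul_left (c := 2⁻¹) enorm_ne_top enorm_ne_top).comp_sub_left π
    rw [show π - (π+θ)/2/2⁻¹ = -θ by field_simp; ring, show π - (π-θ)/2/2⁻¹ = θ by field_simp; ring] at h
    exact h
  -- values of the two majorant integrals
  have hval1 : (∫ φ in (-θ)..θ, (2⁻¹*(θ+φ))^(α-2)) = 2*θ^(α-1)/(α-1) := by
    rw [intervalIntegral.integral_comp_add_left (fun y : ℝ => (2⁻¹*y)^(α-2)) θ,
      show θ + -θ = (0:ℝ) by ring, show θ + θ = 2*θ by ring,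
      intervalIntegral.integral_comp_mul_left (fun y : ℝ => y^(α-2)) (by norm_num : (2:ℝ)⁻¹ ≠ 0),
      show (2:ℝ)⁻¹ * 0 = 0 by norm_num, show (2:ℝ)⁻¹ * (2*θ) = θ by ring,
      integral_rpow (Or.inl hp)]
    rw [Real.zero_rpow (by linarith : α - 2 + 1 ≠ 0), show α - 2 + 1 = α - 1 by ring]
    simp [smul_eq_mul]
    ring
  have hval2 : (∫ φ in (-θ)..θ, (2⁻¹*(π-φ))^(3*α/2-2))
      = 2*(((π+θ)/2)^(3*α/2-1) - ((π-θ)/2)^(3*α/2-1))/(3*α/2-1) := by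
    rw [intervalIntegral.integral_comp_sub_left (fun y : ℝ => (2⁻¹*y)^(3*α/2-2)) π,
      intervalIntegral.integral_comp_mul_left (fun y : ℝ => y^(3*α/2-2))
        (by norm_num : (2:ℝ)⁻¹ ≠ 0),
      show (2:ℝ)⁻¹ * (π - θ) = (π-θ)/2 by ring, show (2:ℝ)⁻¹ * (π - -θ) = (π+θ)/2 by ring,
      integral_rpow (Or.inl hq)]
    rw [show 3*α/2 - 2 + 1 = 3*α/2 - 1 by ring]
    simp [smul_eq_mul]
    ring
  -- bounds on the integral values
  have hbv1 : 2*θ^(α-1)/(α-1) ≤ 2*π^(α-1)/(α-1) := by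
    have := Real.rpow_le_rpow hθ0.le hθπ.le (by linarith : (0:ℝ) ≤ α - 1)
    rw [div_le_div_iff_of_pos_right hα1]
    linarith
  have hA0 : (0:ℝ) ≤ (π-θ)/2 := by linarith
  have hB1 : (π+θ)/2 ≤ π := by linarith
  have hABle : ((π-θ)/2)^(3*α/2-1) ≤ ((π+θ)/2)^(3*α/2-1) :=
    Real.rpow_le_rpow hA0 (by linarith) hq1.le
  have hbv2 : 2*(((π+θ)/2)^(3*α/2-1) - ((π-θ)/2)^(3*α/2-1))/(3*α/2-1)
      ≤ 2*π^(3*α/2-1)/(3*α/2-1) := by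
    rw [div_le_div_iff_of_pos_right hq1]
    have h1 : ((π+θ)/2)^(3*α/2-1) ≤ π^(3*α/2-1) := Real.rpow_le_rpow (by linarith) hB1 hq1.le
    have h2 : (0:ℝ) ≤ ((π-θ)/2)^(3*α/2-1) := Real.rpow_nonneg hA0 _
    linarith
  -- the majorant
  set G : ℝ → ℝ := fun φ => CK * r^(-(α/2)) * ((2⁻¹*(θ+φ))^(α-2) + (2⁻¹*(π-φ))^(3*α/2-2))
    with hGdef
  have hintG : IntervalIntegrable G volume (-θ) θ := by
    apply IntervalIntegrable.const_mul
    exact hint1.add hint2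
  -- a.e. pointwise bound
  have hae : ∀ᵐ (t : ℝ) ∂(volume.restrict (Set.uIoc (-θ) θ)),
      ‖(Complex.exp (t * Complex.I) - Complex.exp (θ * Complex.I)) ^ (α : ℂ) *
        (Complex.exp (t * Complex.I) - Complex.exp (-θ * Complex.I)) ^ ((α : ℂ) - 2) *
        ((ξ : ℂ) + r * Complex.exp (t * Complex.I)) ^ (-(α : ℂ) / 2) *
        Complex.exp (t * Complex.I * (1 - α / 2))‖ ≤ G t := by
    have hne : ∀ᵐ t : ℝ ∂volume, t ≠ θ := by
      rw [MeasureTheory.ae_iff]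
      simp only [not_not]
      rw [show {a : ℝ | a = θ} = {θ} from Set.setOf_eq_eq_singleton]
      exact measure_singleton θ
    filter_upwards [MeasureTheory.ae_restrict_mem measurableSet_uIoc,
      MeasureTheory.ae_restrict_of_ae hne] with φ hmem hφne
    rw [Set.uIoc_of_le (by linarith : -θ ≤ θ)] at hmem
    have hφIoo : φ ∈ Set.Ioo (-θ) θ := ⟨hmem.1, lt_of_le_of_ne hmem.2 hφne⟩
    exact hpw r θ ξ φ hr ⟨hθ0, hθπ⟩ hξ hφIoo
  -- norm of integral bounded by integral of majorant
  have hIbound := intervalIntegral.norm_integral_le_abs_of_norm_le hae hintG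
  -- compute the majorant integral
  have hGval : (∫ t in (-θ)..θ, G t)
      = CK * r^(-(α/2)) * (2*θ^(α-1)/(α-1)
        + 2*(((π+θ)/2)^(3*α/2-1) - ((π-θ)/2)^(3*α/2-1))/(3*α/2-1)) := by
    rw [hGdef]
    rw [intervalIntegral.integral_const_mul]
    rw [intervalIntegral.integral_add hint1 hint2, hval1, hval2]
  have hGnn : 0 ≤ CK * r^(-(α/2)) * (2*θ^(α-1)/(α-1)
      + 2*(((π+θ)/2)^(3*α/2-1) - ((π-θ)/2)^(3*α/2-1))/(3*α/2-1)) := by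
    have h1 : (0:ℝ) ≤ 2*θ^(α-1)/(α-1) := by positivity
    have h2 : (0:ℝ) ≤ 2*(((π+θ)/2)^(3*α/2-1) - ((π-θ)/2)^(3*α/2-1))/(3*α/2-1) := by
      apply div_nonneg ?_ hq1.le
      linarith
    have h3 : (0:ℝ) ≤ CK * r^(-(α/2)) := by positivity
    exact mul_nonneg h3 (by linarith)
  have hnormle : ‖∫ φ in (-θ)..θ,
      (Complex.exp (φ * Complex.I) - Complex.exp (θ * Complex.I)) ^ (α : ℂ) *
      (Complex.exp (φ * Complex.I) - Complex.exp (-θ * Complex.I)) ^ ((α : ℂ) - 2) *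
      ((ξ : ℂ) + r * Complex.exp (φ * Complex.I)) ^ (-(α : ℂ) / 2) *
      Complex.exp (φ * Complex.I * (1 - α / 2))‖
      ≤ CK * r^(-(α/2)) * Ib := by
    refine le_trans hIbound ?_
    rw [hGval, _root_.abs_of_nonneg hGnn, hIbdef]
    apply mul_le_mul_of_nonneg_left ?_ (by positivity)
    linarith
  -- final assembly
  rw [norm_mul, norm_mul, Complex.norm_I, one_mul,
    Complex.norm_cpow_eq_rpow_re_of_pos hr, Complex.ofReal_re]
  calc r ^ (3*α/2 - 1) * ‖∫ φ in (-θ)..θ,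
        (Complex.exp (φ * Complex.I) - Complex.exp (θ * Complex.I)) ^ (α : ℂ) *
        (Complex.exp (φ * Complex.I) - Complex.exp (-θ * Complex.I)) ^ ((α : ℂ) - 2) *
        ((ξ : ℂ) + r * Complex.exp (φ * Complex.I)) ^ (-(α : ℂ) / 2) *
        Complex.exp (φ * Complex.I * (1 - α / 2))‖
      ≤ r ^ (3*α/2 - 1) * (CK * r^(-(α/2)) * Ib) :=
        mul_le_mul_of_nonneg_left hnormle (Real.rpow_nonneg hr.le _)
    _ = CK * Ib * (r ^ (3*α/2 - 1) * r^(-(α/2))) := by ring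
    _ = CK * Ib * r ^ (α - 1) := by
        rw [← Real.rpow_add hr, show 3*α/2 - 1 + -(α/2) = α - 1 by ring]
end

section
/- Let α > 1, ξ > 0, and z = x + iy in the upper half-plane with x > ξ. With J(z, ξ) given by the vertical-segment parametrization J(z, ξ) = ∫_{-y}^{y} (is - iy)^α (is + iy)^{α-2} (x + is)^{-α/2} (x - ξ + is)^{-α/2} i ds, one has Re J(x, ξ) = 0 in the limit y ↓ 0; more precisely, |Re J(x+iy, ξ)| ≤ C y^{2α-1} for x > ξ fixed, so Re J(x+i0, ξ) = 0. -/
open intervalIntegral Real Set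

/-- For `α > 1`, `ξ > 0`, and fixed `x > ξ`, the real part of the vertical-segment
parametrization of `J(x+iy, ξ)` satisfies `|Re J(x+iy, ξ)| ≤ C y^{2α-1}`;
in particular `Re J(x + i0, ξ) = 0` in the limit `y ↓ 0`. -/
theorem reJ_vanishes_on_real_axis (α : ℝ) (hα : 1 < α) (x ξ : ℝ) (hx : ξ < x) (hξ : 0 < ξ) :
    ∃ C > 0, ∀ y : ℝ, 0 < y →
      |(∫ s in (-y)..y,
          (Complex.I * s - Complex.I * y) ^ (α : ℂ) *
          (Complex.I * s + Complex.I * y) ^ ((α : ℂ) - 2) *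
          ((x : ℂ) + Complex.I * s) ^ (-(α : ℂ) / 2) *
          ((x : ℂ) - ξ + Complex.I * s) ^ (-(α : ℂ) / 2) * Complex.I).re| ≤
        C * y ^ (2 * α - 1) := by
  have hx0 : (0:ℝ) < x := hξ.trans hx
  have hxξ : (0:ℝ) < x - ξ := by linarith
  have hα1 : (0:ℝ) < α - 1 := by linarith
  refine ⟨(2:ℝ) ^ (2*α-1) * x ^ (-α/2) * (x-ξ) ^ (-α/2) / (α-1), by positivity, ?_⟩
  intro y hy
  set f : ℝ → ℂ := fun s =>
    (Complex.I * s - Complex.I * y) ^ (α : ℂ) *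
    (Complex.I * s + Complex.I * y) ^ ((α : ℂ) - 2) *
    ((x : ℂ) + Complex.I * s) ^ (-(α : ℂ) / 2) *
    ((x : ℂ) - ξ + Complex.I * s) ^ (-(α : ℂ) / 2) * Complex.I with hf
  set K : ℝ := (2*y) ^ α * x ^ (-α/2) * (x-ξ) ^ (-α/2) with hK
  have hK0 : 0 ≤ K := by positivity
  set g : ℝ → ℝ := fun s => K * (s + y) ^ (α - 2) with hg
  have hgint : IntervalIntegrable g MeasureTheory.volume (-y) y := by
    have h := (intervalIntegrable_rpow' (a := 0) (b := 2*y) (r := α - 2)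
      (by linarith)).comp_add_right y
    rw [show (0:ℝ) - y = -y by ring, show 2*y - y = y by ring] at h
    exact h.const_mul K
  -- pointwise bound
  have hbound : ∀ s ∈ Set.uIoc (-y) y, ‖f s‖ ≤ g s := by
    intro s hs
    rw [uIoc_of_le (by linarith)] at hs
    obtain ⟨hs1, hs2⟩ := hs
    have hsy : 0 < s + y := by linarith
    have h1 : ‖(Complex.I * s - Complex.I * y) ^ (α : ℂ)‖ ≤ (2*y) ^ α := by
      refine (Complex.norm_cpow_le _ _).trans ?_
      simp only [Complex.ofReal_im, Complex.ofReal_re, Complex.im_ofNat, Complex.re_ofNat]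
      rw [show Complex.I * s - Complex.I * y = Complex.I * ((s:ℂ) - y) by ring]
      simp only [Complex.ofReal_im, mul_zero, Real.exp_zero, div_one, norm_mul, Complex.norm_I,
        one_mul]
      have : ‖(s:ℂ) - y‖ = |s - y| := by
        rw [← Complex.ofReal_sub, Complex.norm_real, Real.norm_eq_abs]
      rw [this]
      exact Real.rpow_le_rpow (abs_nonneg _)
        (by rw [abs_le]; constructor <;> nlinarith) (by linarith)
    have h2 : ‖(Complex.I * s + Complex.I * y) ^ ((α : ℂ) - 2)‖ ≤ (s + y) ^ (α - 2) := by
      refine (Complex.norm_cpow_le _ _).trans ?_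
      rw [show Complex.I * s + Complex.I * y = Complex.I * ((s:ℂ) + y) by ring]
      simp only [Complex.sub_im, Complex.ofReal_im, Complex.im_ofNat, sub_self, mul_zero,
        Real.exp_zero, div_one, norm_mul, Complex.norm_I, one_mul, Complex.sub_re,
        Complex.ofReal_re, Complex.re_ofNat]
      have : ‖(s:ℂ) + y‖ = s + y := by
        rw [← Complex.ofReal_add, Complex.norm_real, Real.norm_eq_abs, abs_of_pos hsy]
      rw [this]
    have hc : -(α:ℂ)/2 = ((-α/2 : ℝ):ℂ) := by push_cast; ring
    have h3 : ‖((x : ℂ) + Complex.I * s) ^ (-(α : ℂ) / 2)‖ ≤ x ^ (-α/2) := by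
      rw [hc]
      refine (Complex.norm_cpow_le _ _).trans ?_
      simp only [Complex.ofReal_re, Complex.ofReal_im, mul_zero, Real.exp_zero, div_one]
      have hle : x ≤ ‖((x : ℂ) + Complex.I * s)‖ := by
        have := Complex.abs_re_le_norm ((x : ℂ) + Complex.I * s)
        simpa [abs_of_pos hx0] using this
      exact Real.rpow_le_rpow_of_nonpos hx0 hle (by linarith : -α/2 ≤ 0)
    have h4 : ‖((x : ℂ) - ξ + Complex.I * s) ^ (-(α : ℂ) / 2)‖ ≤ (x - ξ) ^ (-α/2) := by
      rw [hc]
      refine (Complex.norm_cpow_le _ _).trans ?_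
      simp only [Complex.ofReal_re, Complex.ofReal_im, mul_zero, Real.exp_zero, div_one]
      have hle : x - ξ ≤ ‖((x : ℂ) - ξ + Complex.I * s)‖ := by
        have := Complex.abs_re_le_norm ((x : ℂ) - ξ + Complex.I * s)
        simpa [abs_of_pos hxξ] using this
      exact Real.rpow_le_rpow_of_nonpos hxξ hle (by linarith : -α/2 ≤ 0)
    calc ‖f s‖ = ‖(Complex.I * s - Complex.I * y) ^ (α : ℂ)‖ *
          ‖(Complex.I * s + Complex.I * y) ^ ((α : ℂ) - 2)‖ *
          ‖((x : ℂ) + Complex.I * s) ^ (-(α : ℂ) / 2)‖ *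
          ‖((x : ℂ) - ξ + Complex.I * s) ^ (-(α : ℂ) / 2)‖ * ‖(Complex.I : ℂ)‖ := by
            simp [hf, norm_mul]
      _ ≤ (2*y) ^ α * (s + y) ^ (α - 2) * (x ^ (-α/2)) * ((x-ξ) ^ (-α/2)) * 1 := by
            gcongr <;> first | positivity | simp [Complex.norm_I] | assumption
      _ = g s := by rw [hg, hK]; ring
  have hnorm : ‖∫ s in (-y)..y, f s‖ ≤ |∫ s in (-y)..y, g s| :=
    intervalIntegral.norm_integral_le_abs_of_norm_le
      (MeasureTheory.ae_restrict_of_forall_mem measurableSet_uIoc hbound) hgint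
  have hgval : (∫ s in (-y)..y, g s) = K * ((2*y) ^ (α-1) / (α-1)) := by
    rw [intervalIntegral.integral_const_mul]
    have h1 : (∫ s in (-y)..y, (s + y) ^ (α - 2)) = ∫ u in (-y+y)..(y+y), u ^ (α-2) :=
      intervalIntegral.integral_comp_add_right (fun u => u ^ (α-2)) y
    rw [h1, show -y + y = (0:ℝ) by ring, show y + y = 2*y by ring,
      integral_rpow (Or.inl (by linarith))]
    rw [Real.zero_rpow (by linarith : α - 2 + 1 ≠ 0)]
    ring_nf
  have key : K * ((2*y) ^ (α-1) / (α-1)) =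
      (2:ℝ) ^ (2*α-1) * x ^ (-α/2) * (x-ξ) ^ (-α/2) / (α-1) * y ^ (2*α-1) := by
    rw [hK, Real.mul_rpow (by norm_num) hy.le, Real.mul_rpow (by norm_num) hy.le,
      show (2*α-1) = α + (α-1) by ring, Real.rpow_add (by norm_num : (0:ℝ) < 2),
      Real.rpow_add hy]
    ring
  calc |(∫ s in (-y)..y, f s).re| ≤ ‖∫ s in (-y)..y, f s‖ := Complex.abs_re_le_norm _
    _ ≤ |∫ s in (-y)..y, g s| := hnorm
    _ = K * ((2*y) ^ (α-1) / (α-1)) := by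
        rw [hgval]; exact abs_of_nonneg (mul_nonneg hK0 (by positivity))
    _ = _ := key
end

section
/- Let α ≥ 2 and set h_f(θ) = (2^{α+1} π / ĉ) sin(πα/2) sin^{2α-2}(θ) · Re[e^{-iπα/2} ₂F₁(1-α, α, 1; (1 - i cot θ)/2)], where ĉ = 4 sin²(πα/2) sin(πα) Γ(1 - α/2) Γ(3α/2 - 1) / Γ(α). Then h_f is continuous on (0, π) and bounded: there is C > 0 with |h_f(θ)| ≤ C sin^{α-1}(θ) for all θ ∈ (0, π). -/
/-- The rising factorial (Pochhammer symbol) `(x)_k = x(x+1)⋯(x+k-1)` in `ℂ`. -/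
noncomputable def pochC (x : ℂ) (k : ℕ) : ℂ := ∏ i ∈ Finset.range k, (x + i)

/-- `f` is the analytic continuation of the Gauss hypergeometric function
`₂F₁(a, b, c; ·)` to the cut plane `ℂ \ [1, ∞)`. -/
def IsTwoF1 (a b c : ℂ) (f : ℂ → ℂ) : Prop :=
  DifferentiableOn ℂ f {z : ℂ | z.im ≠ 0 ∨ z.re < 1} ∧
  ∀ z : ℂ, ‖z‖ < 1 →
    f z = ∑' k : ℕ, pochC a k * pochC b k / (pochC c k * (Nat.factorial k : ℂ)) * z ^ k

/-- The constant `ĉ = 4 sin²(πα/2) sin(πα) Γ(1-α/2) Γ(3α/2-1) / Γ(α)`. -/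
noncomputable def chat (α : ℝ) : ℝ :=
  4 * Real.sin (Real.pi * α / 2) ^ 2 * Real.sin (Real.pi * α) *
    Real.Gamma (1 - α / 2) * Real.Gamma (3 * α / 2 - 1) / Real.Gamma α

/-- `h_f(θ) = (2^{α+1} π / ĉ) sin(πα/2) sin^{2α-2}θ ·
Re[e^{-iπα/2} ₂F₁(1-α, α, 1; (1 - i cot θ)/2)]`. -/
noncomputable def hF (α : ℝ) (f : ℂ → ℂ) (θ : ℝ) : ℝ :=
  (2 ^ (α + 1) * Real.pi / chat α) * Real.sin (Real.pi * α / 2) *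
    Real.sin θ ^ (2 * α - 2) *
    (Complex.exp (-(Real.pi : ℂ) * α / 2 * Complex.I) *
      f ((1 - Complex.I * (Real.cos θ / Real.sin θ)) / 2)).re

open Finset in
lemma pochC_one (k : ℕ) : pochC 1 k = (Nat.factorial k : ℂ) := by
  induction k with
  | zero => simp [pochC]
  | succ n ih =>
      rw [pochC, Finset.prod_range_succ, ← pochC, ih, Nat.factorial_succ]
      push_cast; ring

lemma pochC_succ (x : ℂ) (k : ℕ) : pochC x (k + 1) = pochC x k * (x + k) := by
  rw [pochC, Finset.prod_range_succ, ← pochC]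

/-- coefficients of the hypergeometric series -/
noncomputable def cc (α : ℝ) (k : ℕ) : ℂ :=
  pochC ((1 - α : ℝ) : ℂ) k * pochC (α : ℂ) k / (pochC 1 k * (Nat.factorial k : ℂ))

lemma cc_rec (α : ℝ) (k : ℕ) :
    ((k : ℂ) + 1) ^ 2 * cc α (k + 1) = (((1 - α : ℝ) : ℂ) + k) * ((α : ℂ) + k) * cc α k := by
  have hk : ((Nat.factorial k : ℂ)) ≠ 0 := by exact_mod_cast Nat.cast_ne_zero.2 (Nat.factorial_ne_zero k)
  have hk1 : ((Nat.factorial (k+1) : ℂ)) ≠ 0 := by exact_mod_cast Nat.cast_ne_zero.2 (Nat.factorial_ne_zero (k+1))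
  have hk2 : ((k : ℂ) + 1) ≠ 0 := Nat.cast_add_one_ne_zero k
  rw [cc, cc, pochC_one, pochC_one, pochC_succ, pochC_succ, Nat.factorial_succ]
  push_cast
  field_simp

/-- the modulus ratio factors -/
noncomputable def rr (α : ℝ) (i : ℕ) : ℝ := |1 - α + i| * (α + i) / ((i : ℝ) + 1) ^ 2

lemma rr_nonneg (α : ℝ) (hα : 2 ≤ α) (i : ℕ) : 0 ≤ rr α i := by
  have h1 : (0:ℝ) ≤ α + i := by positivity
  have h2 : (0:ℝ) < ((i:ℝ)+1)^2 := by positivity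
  exact div_nonneg (mul_nonneg (abs_nonneg _) h1) h2.le

lemma rr_le_sq (α : ℝ) (hα : 2 ≤ α) (i : ℕ) : rr α i ≤ α ^ 2 := by
  have hi : (0:ℝ) ≤ i := Nat.cast_nonneg i
  have h2 : (0:ℝ) < ((i:ℝ)+1)^2 := by positivity
  rw [rr, div_le_iff₀ h2]
  have habs : |1 - α + i| ≤ α + i := by
    rw [abs_le]; constructor <;> nlinarith
  have key : α + (i:ℝ) ≤ α * ((i:ℝ)+1) := by nlinarith
  have h0 : (0:ℝ) ≤ α + i := by linarith
  calc |1 - α + i| * (α + i) ≤ (α + i) * (α + i) :=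
        mul_le_mul_of_nonneg_right habs h0
    _ ≤ (α * ((i:ℝ)+1)) * (α * ((i:ℝ)+1)) := mul_le_mul key key h0 (by nlinarith)
    _ = α ^ 2 * ((i:ℝ)+1)^2 := by ring

lemma rr_le_one (α : ℝ) (hα : 2 ≤ α) (i : ℕ) (hi : α ≤ (i : ℝ) + 1) : rr α i ≤ 1 := by
  have h2 : (0:ℝ) < ((i:ℝ)+1)^2 := by positivity
  rw [rr, div_le_one h2]
  have habs : |1 - α + i| = (i:ℝ) + 1 - α := by
    rw [abs_of_nonneg]; ring_nf; linarith
  rw [habs]; nlinarith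

lemma abs_cc_eq (α : ℝ) (hα : 2 ≤ α) (k : ℕ) :
    ‖cc α k‖ = ∏ i ∈ Finset.range k, rr α i := by
  have h1 : ‖pochC ((1 - α : ℝ) : ℂ) k‖ = ∏ i ∈ Finset.range k, |1 - α + (i:ℝ)| := by
    rw [pochC, norm_prod]
    refine Finset.prod_congr rfl fun i _ => ?_
    rw [show ((1 - α : ℝ) : ℂ) + (i:ℕ) = (((1 - α + i : ℝ)) : ℂ) by push_cast; ring,
      Complex.norm_real, Real.norm_eq_abs]
  have h2 : ‖pochC (α : ℂ) k‖ = ∏ i ∈ Finset.range k, (α + (i:ℝ)) := by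
    rw [pochC, norm_prod]
    refine Finset.prod_congr rfl fun i _ => ?_
    rw [show (α : ℂ) + (i:ℕ) = (((α + i : ℝ)) : ℂ) by push_cast; ring, Complex.norm_real, Real.norm_eq_abs]
    exact abs_of_nonneg (by have := (Nat.cast_nonneg i : (0:ℝ) ≤ i); linarith)
  have h3 : ‖(pochC 1 k * (Nat.factorial k : ℂ))‖ = ∏ i ∈ Finset.range k, ((i:ℝ)+1)^2 := by
    have hprod : ∏ i ∈ Finset.range k, ((i:ℝ)+1) = (Nat.factorial k : ℝ) := by
      rw [← Finset.prod_range_add_one_eq_factorial k, Nat.cast_prod]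
      exact Finset.prod_congr rfl fun i _ => by push_cast; ring
    rw [pochC_one, norm_mul, Complex.norm_natCast,
      Finset.prod_pow, hprod]
    ring
  rw [cc, norm_div, norm_mul, h1, h2, h3, ← Finset.prod_mul_distrib, ← Finset.prod_div_distrib]
  rfl

lemma abs_cc_le (α : ℝ) (hα : 2 ≤ α) (k : ℕ) :
    ‖cc α k‖ ≤ (α ^ 2) ^ (⌈α⌉₊) := by
  rw [abs_cc_eq α hα]
  set N := ⌈α⌉₊ with hN
  have hα1 : (1:ℝ) ≤ α ^ 2 := by nlinarith
  induction k with
  | zero =>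
      simp only [Finset.range_zero, Finset.prod_empty]
      exact one_le_pow₀ hα1
  | succ n ih =>
      rw [Finset.prod_range_succ]
      by_cases hn : n + 1 ≤ N
      · calc (∏ i ∈ Finset.range n, rr α i) * rr α n
            ≤ (∏ i ∈ Finset.range n, α ^ 2) * α ^ 2 := by
              refine mul_le_mul (Finset.prod_le_prod (fun i _ => rr_nonneg α hα i)
                (fun i _ => rr_le_sq α hα i)) (rr_le_sq α hα n) (rr_nonneg α hα n) ?_
              positivity
          _ = (α ^ 2) ^ (n + 1) := by rw [Finset.prod_const]; ring_nf; simp [pow_succ]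
          _ ≤ (α ^ 2) ^ N := pow_le_pow_right₀ hα1 hn
      · push_neg at hn
        have hge : N ≤ n := by omega
        have : α ≤ (n : ℝ) + 1 := by
          calc α ≤ (N : ℝ) := Nat.le_ceil α
            _ ≤ (n : ℝ) := by exact_mod_cast Nat.cast_le.2 hge
            _ ≤ (n : ℝ) + 1 := by linarith
        calc (∏ i ∈ Finset.range n, rr α i) * rr α n ≤ (α ^ 2) ^ N * 1 :=
              mul_le_mul ih (rr_le_one α hα n this)
                (rr_nonneg α hα n) (by positivity)
          _ = (α ^ 2) ^ N := mul_one _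


section Series
variable (α : ℝ)

noncomputable def ccM (α : ℝ) : ℝ := (α ^ 2) ^ (⌈α⌉₊)

lemma ccM_pos (hα : 2 ≤ α) : 0 < ccM α := by
  have : (0:ℝ) < α ^ 2 := by nlinarith
  exact pow_pos this _

noncomputable def g0 (k : ℕ) (z : ℂ) : ℂ := cc α k * z ^ k
noncomputable def g1 (k : ℕ) (z : ℂ) : ℂ := cc α k * ((k : ℂ) * z ^ (k - 1))
noncomputable def g2 (k : ℕ) (z : ℂ) : ℂ :=
  cc α k * ((k : ℂ) * (((k - 1 : ℕ)) : ℂ) * z ^ (k - 2))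

noncomputable def F (z : ℂ) : ℂ := ∑' k, g0 α k z
noncomputable def F1 (z : ℂ) : ℂ := ∑' k, g1 α k z
noncomputable def F2 (z : ℂ) : ℂ := ∑' k, g2 α k z

variable {α}

lemma norm_g0_le (hα : 2 ≤ α) {z : ℂ} (hz : ‖z‖ ≤ 3/4) (k : ℕ) :
    ‖g0 α k z‖ ≤ ccM α * (3/4 : ℝ) ^ k := by
  rw [g0, norm_mul, norm_pow]
  have h1 : ‖(cc α k : ℂ)‖ ≤ ccM α := abs_cc_le α hα k
  have h2 : ‖z‖ ^ k ≤ (3/4:ℝ) ^ k := pow_le_pow_left₀ (norm_nonneg z) hz k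
  exact mul_le_mul h1 h2 (by positivity) (ccM_pos α hα).le

lemma pow_sub_le {q : ℝ} (hq : 0 < q) (hq1 : q ≤ 1) (m k : ℕ) :
    q ^ (k - m) ≤ (1/q) ^ m * q ^ k := by
  rcases le_or_gt (m) k with h | h
  · rw [one_div, inv_pow, ← div_eq_inv_mul, le_div_iff₀ (by positivity), ← pow_add]
    rw [Nat.sub_add_cancel h]
  · have hkm : k - m = 0 := by omega
    rw [hkm, pow_zero, one_div, inv_pow, ← div_eq_inv_mul, le_div_iff₀ (by positivity), one_mul]
    exact pow_le_pow_of_le_one hq.le hq1 h.le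

lemma norm_g1_le (hα : 2 ≤ α) {z : ℂ} (hz : ‖z‖ ≤ 3/4) (k : ℕ) :
    ‖g1 α k z‖ ≤ (4/3) * ccM α * ((k:ℝ) * (3/4 : ℝ) ^ k) := by
  rw [g1, norm_mul, norm_mul, norm_pow, Complex.norm_natCast]
  have h2 : ‖z‖ ^ (k-1) ≤ (3/4:ℝ) ^ (k-1) := pow_le_pow_left₀ (norm_nonneg z) hz _
  have h3 : (3/4:ℝ) ^ (k-1) ≤ (4/3) * (3/4)^k := by
    have := pow_sub_le (by norm_num : (0:ℝ) < 3/4) (by norm_num) 1 k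
    norm_num at this ⊢
    linarith
  have h1 : ‖(cc α k : ℂ)‖ ≤ ccM α := abs_cc_le α hα k
  calc ‖(cc α k : ℂ)‖ * ((k:ℝ) * ‖z‖^(k-1)) ≤ ccM α * ((k:ℝ) * ((4/3) * (3/4)^k)) := by
        refine mul_le_mul h1 ?_ (by positivity) (ccM_pos α hα).le
        exact mul_le_mul_of_nonneg_left (le_trans h2 h3) (Nat.cast_nonneg k)
    _ = (4/3) * ccM α * ((k:ℝ) * (3/4)^k) := by ring

lemma norm_g2_le (hα : 2 ≤ α) {z : ℂ} (hz : ‖z‖ ≤ 3/4) (k : ℕ) :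
    ‖g2 α k z‖ ≤ (16/9) * ccM α * ((k:ℝ)^2 * (3/4 : ℝ) ^ k) := by
  rw [g2, norm_mul, norm_mul, norm_mul, norm_pow, Complex.norm_natCast, Complex.norm_natCast]
  have h2 : ‖z‖ ^ (k-2) ≤ (3/4:ℝ) ^ (k-2) := pow_le_pow_left₀ (norm_nonneg z) hz _
  have h3 : (3/4:ℝ) ^ (k-2) ≤ (16/9) * (3/4)^k := by
    have := pow_sub_le (by norm_num : (0:ℝ) < 3/4) (by norm_num) 2 k
    norm_num at this ⊢
    linarith
  have h1 : ‖(cc α k : ℂ)‖ ≤ ccM α := abs_cc_le α hα k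
  have h4 : ((k-1:ℕ):ℝ) ≤ (k:ℝ) := by exact_mod_cast Nat.cast_le.2 (Nat.sub_le k 1)
  calc ‖(cc α k : ℂ)‖ * ((k:ℝ) * ((k-1:ℕ):ℝ) * ‖z‖^(k-2))
      ≤ ccM α * ((k:ℝ) * (k:ℝ) * ((16/9) * (3/4)^k)) := by
        refine mul_le_mul h1 ?_ (by positivity) (ccM_pos α hα).le
        refine mul_le_mul ?_ (le_trans h2 h3) (by positivity) (by positivity)
        exact mul_le_mul_of_nonneg_left h4 (Nat.cast_nonneg k)
    _ = (16/9) * ccM α * ((k:ℝ)^2 * (3/4)^k) := by ring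

end Series

section Deriv
variable {α : ℝ}

lemma summable_geo0 : Summable (fun k : ℕ => ccM α * (3/4 : ℝ) ^ k) :=
  (summable_geometric_of_lt_one (by norm_num) (by norm_num)).mul_left _

lemma summable_geo1 : Summable (fun k : ℕ => (4/3) * ccM α * ((k:ℝ) * (3/4 : ℝ) ^ k)) := by
  have h := summable_pow_mul_geometric_of_norm_lt_one (R := ℝ) 1 (r := 3/4)
    (by rw [Real.norm_eq_abs]; rw [abs_of_nonneg] <;> norm_num)
  simpa [pow_one] using h.mul_left ((4/3) * ccM α)

lemma summable_geo2 : Summable (fun k : ℕ => (16/9) * ccM α * ((k:ℝ)^2 * (3/4 : ℝ) ^ k)) := by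
  have h := summable_pow_mul_geometric_of_norm_lt_one (R := ℝ) 2 (r := 3/4)
    (by rw [Real.norm_eq_abs]; rw [abs_of_nonneg] <;> norm_num)
  exact h.mul_left _

lemma summable_g0 (hα : 2 ≤ α) {z : ℂ} (hz : ‖z‖ ≤ 3/4) : Summable (fun k => g0 α k z) :=
  Summable.of_norm_bounded summable_geo0 (norm_g0_le hα hz)

lemma summable_g1 (hα : 2 ≤ α) {z : ℂ} (hz : ‖z‖ ≤ 3/4) : Summable (fun k => g1 α k z) :=
  Summable.of_norm_bounded summable_geo1 (norm_g1_le hα hz)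

lemma summable_g2 (hα : 2 ≤ α) {z : ℂ} (hz : ‖z‖ ≤ 3/4) : Summable (fun k => g2 α k z) :=
  Summable.of_norm_bounded summable_geo2 (norm_g2_le hα hz)

lemma hasDerivAt_g0 (k : ℕ) (z : ℂ) : HasDerivAt (g0 α k) (g1 α k z) z := by
  exact (hasDerivAt_pow k z).const_mul (cc α k)

lemma hasDerivAt_g1 (k : ℕ) (z : ℂ) : HasDerivAt (g1 α k) (g2 α k z) z := by
  have h := ((hasDerivAt_pow (k-1) z).const_mul (cc α k * (k:ℂ)))
  have heq : (fun z : ℂ => cc α k * (k:ℂ) * z ^ (k-1)) = g1 α k := by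
    funext y; rw [g1]; ring
  rw [heq] at h
  have : cc α k * (k:ℂ) * ((((k-1:ℕ)):ℂ) * z ^ (k - 1 - 1)) = g2 α k z := by
    rw [g2, Nat.sub_sub]; ring
  rwa [this] at h

lemma hasDerivAt_F (hα : 2 ≤ α) {z : ℂ} (hz : z ∈ Metric.ball (0:ℂ) (3/4)) :
    HasDerivAt (F α) (F1 α z) z := by
  refine hasDerivAt_tsum_of_isPreconnected (y₀ := (0:ℂ)) summable_geo1 Metric.isOpen_ball
    ((convex_ball _ _).isPreconnected) (fun k y _ => hasDerivAt_g0 k y)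
    (fun k y hy => norm_g1_le hα (le_of_lt (mem_ball_zero_iff.1 hy)) k) ?_ ?_ hz
  · exact Metric.mem_ball_self (by norm_num)
  · exact summable_g0 hα (by rw [norm_zero]; norm_num)

lemma hasDerivAt_F1 (hα : 2 ≤ α) {z : ℂ} (hz : z ∈ Metric.ball (0:ℂ) (3/4)) :
    HasDerivAt (F1 α) (F2 α z) z := by
  refine hasDerivAt_tsum_of_isPreconnected (y₀ := (0:ℂ)) summable_geo2 Metric.isOpen_ball
    ((convex_ball _ _).isPreconnected) (fun k y _ => hasDerivAt_g1 k y)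
    (fun k y hy => norm_g2_le hα (le_of_lt (mem_ball_zero_iff.1 hy)) k) ?_ ?_ hz
  · exact Metric.mem_ball_self (by norm_num)
  · exact summable_g1 hα (by rw [norm_zero]; norm_num)

end Deriv

section ODE
variable {α : ℝ}

noncomputable def vv (α : ℝ) (z : ℂ) (k : ℕ) : ℂ := (k:ℂ)^2 * cc α k * z ^ (k-1)

lemma vv_succ (z : ℂ) (k : ℕ) :
    vv α z (k+1) = (((1 - α : ℝ):ℂ) + k) * ((α:ℂ) + k) * cc α k * z ^ k := by
  rw [vv, Nat.add_sub_cancel, show ((k+1:ℕ):ℂ) = (k:ℂ)+1 by push_cast; ring, cc_rec]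

lemma summable_vv (hα : 2 ≤ α) {z : ℂ} (hz : ‖z‖ ≤ 3/4) : Summable (vv α z) := by
  refine Summable.of_norm_bounded (summable_geo2 (α := α)) (fun k => ?_)
  rw [vv, norm_mul, norm_mul, norm_pow, norm_pow, Complex.norm_natCast]
  have h1 : ‖(cc α k : ℂ)‖ ≤ ccM α := abs_cc_le α hα k
  have h2 : ‖z‖ ^ (k-1) ≤ (3/4:ℝ) ^ (k-1) := pow_le_pow_left₀ (norm_nonneg z) hz _
  have h3 : (3/4:ℝ) ^ (k-1) ≤ (4/3) * (3/4)^k := by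
    have := pow_sub_le (by norm_num : (0:ℝ) < 3/4) (by norm_num) 1 k
    norm_num at this ⊢; linarith
  calc (k:ℝ)^2 * ‖(cc α k : ℂ)‖ * ‖z‖^(k-1)
      ≤ (k:ℝ)^2 * ccM α * ((4/3) * (3/4)^k) := by
        refine mul_le_mul (mul_le_mul_of_nonneg_left h1 (by positivity))
          (le_trans h2 h3) (by positivity)
          (mul_nonneg (by positivity) (ccM_pos α hα).le)
    _ ≤ (16/9) * ccM α * ((k:ℝ)^2 * (3/4)^k) := by
        have h0 : (0:ℝ) ≤ ccM α * ((k:ℝ)^2 * (3/4)^k) :=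
          mul_nonneg (ccM_pos α hα).le (by positivity)
        nlinarith [h0]

lemma key_telescope (z : ℂ) (k : ℕ) :
    z * (1-z) * g2 α k z + (1 - 2*z) * g1 α k z - (((1-α:ℝ):ℂ) * (α:ℂ)) * g0 α k z
      = vv α z k - vv α z (k+1) := by
  rw [vv_succ]
  match k with
  | 0 =>
      rw [g0, g1, g2, vv]
      first
      | (norm_num; push_cast; ring)
      | norm_num
      | (push_cast; ring)
  | 1 =>
      rw [g0, g1, g2, vv]
      first
      | (norm_num; push_cast; ring)
      | norm_num
      | (push_cast; ring)
  | (n+2) =>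
      rw [g0, g1, g2, vv]
      push_cast
      ring

lemma ode_ball (hα : 2 ≤ α) {z : ℂ} (hz : ‖z‖ ≤ 3/4) :
    z * (1-z) * F2 α z + (1 - 2*z) * F1 α z - (((1-α:ℝ):ℂ) * (α:ℂ)) * F α z = 0 := by
  have hs0 : HasSum (fun k => g0 α k z) (F α z) := (summable_g0 hα hz).hasSum
  have hs1 : HasSum (fun k => g1 α k z) (F1 α z) := (summable_g1 hα hz).hasSum
  have hs2 : HasSum (fun k => g2 α k z) (F2 α z) := (summable_g2 hα hz).hasSum
  have hsv : HasSum (vv α z) (∑' k, vv α z k) := (summable_vv hα hz).hasSum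
  have hv0 : vv α z 0 = 0 := by simp [vv]
  have hshift : HasSum (fun k => vv α z (k+1)) (∑' k, vv α z k) := by
    have h2 : HasSum (vv α z) ((∑' k, vv α z k) + ∑ i ∈ Finset.range 1, vv α z i) := by
      have he : (∑' k, vv α z k) + ∑ i ∈ Finset.range 1, vv α z i = ∑' k, vv α z k := by
        simp [hv0]
      rw [he]; exact hsv
    exact (hasSum_nat_add_iff 1).2 h2
  have hLHS : HasSum
      (fun k => z * (1-z) * g2 α k z + (1 - 2*z) * g1 α k z
        - (((1-α:ℝ):ℂ) * (α:ℂ)) * g0 α k z)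
      (z * (1-z) * F2 α z + (1 - 2*z) * F1 α z - (((1-α:ℝ):ℂ) * (α:ℂ)) * F α z) :=
    ((hs2.mul_left _).add (hs1.mul_left _)).sub (hs0.mul_left _)
  have hRHS : HasSum (fun k => vv α z k - vv α z (k+1)) 0 := by
    have := hsv.sub hshift
    simpa using this
  have := hLHS
  rw [funext (key_telescope z)] at this
  exact this.unique hRHS

end ODE

section Cut

def cutPlane : Set ℂ := {z : ℂ | z.im ≠ 0 ∨ z.re < 1}

lemma isOpen_cutPlane : IsOpen cutPlane := by
  have h1 : IsOpen {z : ℂ | z.im ≠ 0} := isOpen_ne.preimage Complex.continuous_im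
  have h2 : IsOpen {z : ℂ | z.re < 1} := isOpen_Iio.preimage Complex.continuous_re
  exact h1.union h2

lemma isPreconnected_cutPlane : IsPreconnected cutPlane := by
  have hA : IsPreconnected {z : ℂ | z.re < 1} := (convex_halfSpace_re_lt 1).isPreconnected
  have hB : IsPreconnected {z : ℂ | 0 < z.im} := (convex_halfSpace_im_gt 0).isPreconnected
  have hC : IsPreconnected {z : ℂ | z.im < 0} := (convex_halfSpace_im_lt 0).isPreconnected
  have hAB : IsPreconnected ({z : ℂ | z.re < 1} ∪ {z : ℂ | 0 < z.im}) := by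
    refine IsPreconnected.union Complex.I ?_ ?_ hA hB
    · simp [Set.mem_setOf_eq, Complex.I_re]
    · simp [Set.mem_setOf_eq, Complex.I_im]
  have hABC : IsPreconnected (({z : ℂ | z.re < 1} ∪ {z : ℂ | 0 < z.im}) ∪ {z : ℂ | z.im < 0}) := by
    refine IsPreconnected.union (-Complex.I) ?_ ?_ hAB hC
    · left; simp [Complex.neg_re, Complex.I_re]
    · simp [Complex.neg_im, Complex.I_im]
  have heq : cutPlane = ({z : ℂ | z.re < 1} ∪ {z : ℂ | 0 < z.im}) ∪ {z : ℂ | z.im < 0} := by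
    ext z
    simp only [cutPlane, Set.mem_setOf_eq, Set.mem_union]
    constructor
    · rintro (h | h)
      · rcases lt_or_gt_of_ne h with h' | h'
        · right; exact h'
        · left; right; exact h'
      · left; left; exact h
    · rintro ((h | h) | h)
      · right; exact h
      · left; exact ne_of_gt h
      · left; exact ne_of_lt h
  rw [heq]
  exact hABC

variable {α : ℝ} {f : ℂ → ℂ}

lemma ode_cut (hα : 2 ≤ α) (hf : IsTwoF1 ((1 - α : ℝ) : ℂ) (α : ℂ) 1 f) :
    ∀ z ∈ cutPlane,
      z * (1-z) * deriv (deriv f) z + (1 - 2*z) * deriv f z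
        - (((1-α:ℝ):ℂ) * (α:ℂ)) * f z = 0 := by
  have hd : DifferentiableOn ℂ f cutPlane := hf.1
  have han : AnalyticOnNhd ℂ f cutPlane := hd.analyticOnNhd isOpen_cutPlane
  have h1 : AnalyticOnNhd ℂ (deriv f) cutPlane := han.deriv
  have h2 : AnalyticOnNhd ℂ (deriv (deriv f)) cutPlane := h1.deriv
  set E : ℂ → ℂ := fun z => z * (1-z) * deriv (deriv f) z + (1 - 2*z) * deriv f z
      - (((1-α:ℝ):ℂ) * (α:ℂ)) * f z with hE
  have hanE : AnalyticOnNhd ℂ E cutPlane := by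
    apply AnalyticOnNhd.sub
    apply AnalyticOnNhd.add
    · exact (analyticOnNhd_id.mul (analyticOnNhd_const.sub analyticOnNhd_id)).mul h2
    · exact (analyticOnNhd_const.sub (analyticOnNhd_const.mul analyticOnNhd_id)).mul h1
    · exact analyticOnNhd_const.mul han
  have hfF : Set.EqOn f (F α) (Metric.ball (0:ℂ) 1) := by
    intro z hz
    rw [mem_ball_zero_iff] at hz
    exact hf.2 z hz
  have hball_mem : ∀ z : ℂ, ‖z‖ < 3/4 → Metric.ball (0:ℂ) 1 ∈ nhds z := fun z hz =>
    Metric.isOpen_ball.mem_nhds (mem_ball_zero_iff.2 (by linarith))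
  have hderiv1 : ∀ z : ℂ, ‖z‖ < 3/4 → HasDerivAt f (F1 α z) z := by
    intro z hz
    exact (hasDerivAt_F hα (mem_ball_zero_iff.2 hz)).congr_of_eventuallyEq
      (Filter.eventuallyEq_of_mem (hball_mem z hz) hfF)
  have hderiv1' : ∀ z : ℂ, ‖z‖ < 3/4 → deriv f z = F1 α z := fun z hz => (hderiv1 z hz).deriv
  have hderiv2 : ∀ z : ℂ, ‖z‖ < 3/4 → HasDerivAt (deriv f) (F2 α z) z := by
    intro z hz
    refine (hasDerivAt_F1 hα (mem_ball_zero_iff.2 hz)).congr_of_eventuallyEq ?_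
    have : Metric.ball (0:ℂ) (3/4) ∈ nhds z := Metric.isOpen_ball.mem_nhds (mem_ball_zero_iff.2 hz)
    exact Filter.eventuallyEq_of_mem this (fun y hy => hderiv1' y (mem_ball_zero_iff.1 hy))
  have hE0 : ∀ z : ℂ, ‖z‖ < 3/4 → E z = 0 := by
    intro z hz
    rw [hE]
    simp only
    rw [hderiv1' z hz, (hderiv2 z hz).deriv, hfF (mem_ball_zero_iff.2 (by linarith : ‖z‖ < 1))]
    exact ode_ball hα hz.le
  have h0mem : (0:ℂ) ∈ cutPlane := by
    right; simp
  have hev : E =ᶠ[nhds 0] 0 := by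
    refine Filter.eventuallyEq_of_mem (Metric.isOpen_ball.mem_nhds
      (Metric.mem_ball_self (by norm_num : (0:ℝ) < 3/4))) (fun z hz => ?_)
    exact hE0 z (mem_ball_zero_iff.1 hz)
  exact hanE.eqOn_zero_of_preconnected_of_eventuallyEq_zero isPreconnected_cutPlane h0mem hev

end Cut

section Line
variable {α : ℝ} {f : ℂ → ℂ}

/-- the complex line map -/
noncomputable def zx (x : ℝ) : ℂ := (1 - Complex.I * x) / 2

lemma zx_re (x : ℝ) : (zx x).re = 1/2 := by
  simp [zx, Complex.div_re, Complex.sub_re, Complex.mul_re]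

lemma zx_mem (x : ℝ) : zx x ∈ cutPlane := by
  right; rw [zx_re]; norm_num

lemma hasDerivAt_zxC (w : ℂ) :
    HasDerivAt (fun w : ℂ => (1 - Complex.I * w) / 2) (-Complex.I / 2) w := by
  have h := (((hasDerivAt_id w).const_mul Complex.I).const_sub 1).div_const 2
  exact h.congr_deriv (by ring)

/-- u, u', u'' along the line -/
noncomputable def uu (f : ℂ → ℂ) (x : ℝ) : ℂ := f (zx x)
noncomputable def uu1 (f : ℂ → ℂ) (x : ℝ) : ℂ := (-Complex.I / 2) * deriv f (zx x)
noncomputable def uu2 (f : ℂ → ℂ) (x : ℝ) : ℂ := (-(1:ℂ) / 4) * deriv (deriv f) (zx x)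

lemma hasDerivAt_comp_zx {g : ℂ → ℂ} (hg : ∀ z ∈ cutPlane, AnalyticAt ℂ g z) (x : ℝ) :
    HasDerivAt (fun y : ℝ => g (zx y)) ((-Complex.I / 2) * deriv g (zx x)) x := by
  have hd : HasDerivAt g (deriv g (zx x)) (zx x) :=
    ((hg _ (zx_mem x)).differentiableAt).hasDerivAt
  have hcomp : HasDerivAt (fun w : ℂ => g ((1 - Complex.I * w) / 2))
      (deriv g (zx x) * (-Complex.I / 2)) ((x : ℂ)) := by
    have hz : zx x = (1 - Complex.I * (x:ℂ)) / 2 := rfl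
    exact HasDerivAt.comp (x:ℂ) (hz ▸ hd) (hasDerivAt_zxC _)
  have := hcomp.comp_ofReal
  exact this.congr_deriv (by ring)

lemma analyticAt_of_isTwoF1 (hf : IsTwoF1 ((1 - α : ℝ) : ℂ) (α : ℂ) 1 f) :
    ∀ z ∈ cutPlane, AnalyticAt ℂ f z :=
  fun z hz => (hf.1.analyticOnNhd isOpen_cutPlane) z hz

lemma hasDerivAt_uu (hf : IsTwoF1 ((1 - α : ℝ) : ℂ) (α : ℂ) 1 f) (x : ℝ) :
    HasDerivAt (uu f) (uu1 f x) x :=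
  hasDerivAt_comp_zx (analyticAt_of_isTwoF1 hf) x

lemma hasDerivAt_uu1 (hf : IsTwoF1 ((1 - α : ℝ) : ℂ) (α : ℂ) 1 f) (x : ℝ) :
    HasDerivAt (uu1 f) (uu2 f x) x := by
  have han : AnalyticOnNhd ℂ (deriv f) cutPlane :=
    (hf.1.analyticOnNhd isOpen_cutPlane).deriv
  have h := (hasDerivAt_comp_zx (fun z hz => han z hz) x).const_mul (-Complex.I / 2)
  have heq : (fun y : ℝ => (-Complex.I/2) * deriv f (zx y)) = uu1 f := rfl
  rw [heq] at h
  have heq2 : (-Complex.I/2) * ((-Complex.I / 2) * deriv (deriv f) (zx x)) = uu2 f x := by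
    rw [uu2]
    linear_combination (deriv (deriv f) (zx x) / 4) * Complex.I_mul_I
  rwa [heq2] at h

lemma ode_line (hα : 2 ≤ α) (hf : IsTwoF1 ((1 - α : ℝ) : ℂ) (α : ℂ) 1 f) (x : ℝ) :
    ((1 + x^2 : ℝ) : ℂ) * uu2 f x + (2*x : ℝ) * uu1 f x = ((α * (α-1) : ℝ) : ℂ) * uu f x := by
  have h := ode_cut hα hf (zx x) (zx_mem x)
  have hz : zx x = (1 - Complex.I * (x:ℂ)) / 2 := rfl
  have h1 : zx x * (1 - zx x) = ((1 + x^2 : ℝ) : ℂ) / 4 := by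
    rw [hz]
    push_cast
    linear_combination (-((x:ℂ)^2)/4) * Complex.I_mul_I
  have h2 : 1 - 2 * zx x = Complex.I * x := by
    rw [hz]; field_simp; ring
  rw [h1, h2] at h
  -- h : ((1+x²):ℂ)/4 * f'' + I x * f' - (1-α)α f = 0
  rw [uu, uu1, uu2]
  push_cast at h ⊢
  linear_combination (-1 : ℂ) * h

end Line

section Compare

/-- auxiliary barrier functions -/
noncomputable def cmpW (C ε α : ℝ) (v : ℝ → ℝ) (x : ℝ) : ℝ :=
  C * x ^ (α-1) + ε * x ^ α - v x
noncomputable def cmpW1 (C ε α : ℝ) (v1 : ℝ → ℝ) (x : ℝ) : ℝ :=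
  C * ((α-1) * x ^ (α-2)) + ε * (α * x ^ (α-1)) - v1 x
noncomputable def cmpW2 (C ε α : ℝ) (v2 : ℝ → ℝ) (x : ℝ) : ℝ :=
  C * ((α-1) * ((α-2) * x ^ (α-3))) + ε * (α * ((α-1) * x ^ (α-2))) - v2 x
noncomputable def cmpV (C ε α : ℝ) (v1 : ℝ → ℝ) (x : ℝ) : ℝ :=
  (1 + x^2) * cmpW1 C ε α v1 x

variable {C ε α : ℝ} {v v1 v2 : ℝ → ℝ}

lemma hasDerivAt_cmpW (hv : ∀ x, HasDerivAt v (v1 x) x) {x : ℝ} (hx : 0 < x) :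
    HasDerivAt (cmpW C ε α v) (cmpW1 C ε α v1 x) x := by
  have h1 := Real.hasDerivAt_rpow_const (x := x) (p := α - 1) (Or.inl hx.ne')
  have h2 := Real.hasDerivAt_rpow_const (x := x) (p := α) (Or.inl hx.ne')
  have h := ((h1.const_mul C).add (h2.const_mul ε)).sub (hv x)
  have he : C * ((α - 1) * x ^ (α - 1 - 1)) + ε * (α * x ^ (α - 1)) - v1 x
      = cmpW1 C ε α v1 x := by
    rw [cmpW1, show α - 1 - 1 = α - 2 by ring]
  rw [← he]
  exact h

lemma hasDerivAt_cmpW1 (hv1 : ∀ x, HasDerivAt v1 (v2 x) x) {x : ℝ} (hx : 0 < x) :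
    HasDerivAt (cmpW1 C ε α v1) (cmpW2 C ε α v2 x) x := by
  have h1 := Real.hasDerivAt_rpow_const (x := x) (p := α - 2) (Or.inl hx.ne')
  have h2 := Real.hasDerivAt_rpow_const (x := x) (p := α - 1) (Or.inl hx.ne')
  have h := (((h1.const_mul (α-1)).const_mul C).add ((h2.const_mul α).const_mul ε)).sub (hv1 x)
  have he : C * ((α - 1) * ((α - 2) * x ^ (α - 2 - 1))) + ε * (α * ((α - 1) * x ^ (α - 1 - 1)))
      - v2 x = cmpW2 C ε α v2 x := by
    rw [cmpW2, show α - 2 - 1 = α - 3 by ring, show α - 1 - 1 = α - 2 by ring]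
  rw [← he]
  exact h

lemma hasDerivAt_cmpV (hv1 : ∀ x, HasDerivAt v1 (v2 x) x) {x : ℝ} (hx : 0 < x) :
    HasDerivAt (cmpV C ε α v1)
      (2*x * cmpW1 C ε α v1 x + (1 + x^2) * cmpW2 C ε α v2 x) x := by
  have hq : HasDerivAt (fun y : ℝ => 1 + y^2) (2*x) x := by
    simpa using (hasDerivAt_pow 2 x).const_add 1
  have h2 := hq.mul (hasDerivAt_cmpW1 (C := C) (ε := ε) (α := α) hv1 hx)
  exact h2

/-- the supersolution inequality -/
lemma cmp_supersolution (hα : 2 ≤ α) (hC0 : 0 ≤ C) (hε : 0 < ε)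
    (hode : ∀ x, (1 + x^2) * v2 x + 2*x*v1 x = α*(α-1) * v x)
    {x : ℝ} (hx : 1 ≤ x) :
    α*(α-1) * cmpW C ε α v x ≤ (1+x^2) * cmpW2 C ε α v2 x + 2*x* cmpW1 C ε α v1 x := by
  have hx0 : (0:ℝ) < x := lt_of_lt_of_le one_pos hx
  have hA : (0:ℝ) ≤ x ^ (α-3) := Real.rpow_nonneg hx0.le _
  have e1 : x ^ (α-2) = x ^ (α-3) * x := by
    rw [show α - 2 = (α-3) + 1 by ring, Real.rpow_add_one hx0.ne']
  have e2 : x ^ (α-1) = x ^ (α-3) * x^2 := by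
    rw [show α - 1 = (α-3) + 2 by ring, Real.rpow_add hx0,
      show ((2:ℝ)) = ((2:ℕ):ℝ) by norm_num, Real.rpow_natCast]
  have e3 : x ^ α = x ^ (α-3) * x^3 := by
    have a1 : x ^ (α - 1 + 1) = x ^ (α - 1) * x := Real.rpow_add_one hx0.ne' (α - 1)
    have a2 : x ^ α = x ^ (α - 1) * x := by
      rw [← a1]; congr 1; ring
    rw [a2, e2]; ring
  have hv' := hode x
  rw [cmpW, cmpW1, cmpW2, e1, e2, e3]
  have h1 : (0:ℝ) ≤ C * (α-1) * (α-2) * x ^ (α-3) :=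
    mul_nonneg (mul_nonneg (mul_nonneg hC0 (by linarith)) (by linarith)) hA
  have h2 : (0:ℝ) ≤ ε * α * (((α-1)*x + 2*x^3) * x ^ (α-3)) := by
    refine mul_nonneg (mul_nonneg hε.le (by linarith)) (mul_nonneg ?_ hA)
    nlinarith
  nlinarith [h1, h2, hv']

/-- Comparison/maximum-principle bound for solutions of `(1+x²)v'' + 2xv' = α(α-1)v`. -/
lemma ode_compare (hα : 2 ≤ α) (hv : ∀ x, HasDerivAt v (v1 x) x)
    (hv1 : ∀ x, HasDerivAt v1 (v2 x) x)
    (hode : ∀ x, (1 + x^2) * v2 x + 2*x*v1 x = α*(α-1) * v x)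
    (hC1 : |v 1| ≤ C) (hC2 : |v1 1| ≤ C * (α - 1)) :
    ∀ x, 1 ≤ x → v x ≤ C * x ^ (α - 1) := by
  have hC0 : 0 ≤ C := le_trans (abs_nonneg _) hC1
  have hα1 : (0:ℝ) < α - 1 := by linarith
  have main : ∀ ε, 0 < ε → ∀ x, 1 ≤ x → 0 < cmpW C ε α v x := by
    intro ε hε
    have hw1pos : 0 < cmpW1 C ε α v1 1 := by
      rw [cmpW1, Real.one_rpow, Real.one_rpow]
      have : v1 1 ≤ C * (α-1) := le_trans (le_abs_self _) hC2
      nlinarith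
    have hwpos1 : 0 < cmpW C ε α v 1 := by
      rw [cmpW, Real.one_rpow, Real.one_rpow]
      have : v 1 ≤ C := le_trans (le_abs_self _) hC1
      nlinarith
    by_contra hcon
    push_neg at hcon
    obtain ⟨b, hb1, hb⟩ := hcon
    set T : Set ℝ := {x | 1 ≤ x ∧ cmpW C ε α v x ≤ 0} with hT
    have hwc : ContinuousOn (cmpW C ε α v) (Set.Ici (1:ℝ)) := fun y hy =>
      ((hasDerivAt_cmpW hv (lt_of_lt_of_le one_pos hy)).continuousAt).continuousWithinAt
    have hTclosed : IsClosed T := by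
      have : T = Set.Ici (1:ℝ) ∩ (cmpW C ε α v) ⁻¹' (Set.Iic (0:ℝ)) := by
        ext y; simp [hT, Set.mem_setOf_eq]
      rw [this]
      exact ContinuousOn.preimage_isClosed_of_isClosed hwc isClosed_Ici isClosed_Iic
    have hTne : T.Nonempty := ⟨b, hb1, hb⟩
    have hTbdd : BddBelow T := ⟨1, fun y hy => hy.1⟩
    have hx₀T : sInf T ∈ T := hTclosed.csInf_mem hTne hTbdd
    set x₀ := sInf T with hx₀
    have hx₀1 : 1 ≤ x₀ := hx₀T.1
    have hx₀gt : 1 < x₀ := by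
      rcases eq_or_lt_of_le hx₀1 with h | h
      · exfalso; rw [← h] at hx₀T; have := hx₀T.2; linarith
      · exact h
    have hwpos : ∀ y, 1 ≤ y → y < x₀ → 0 < cmpW C ε α v y := by
      intro y hy1 hy2
      by_contra hc
      push_neg at hc
      have hmem : y ∈ T := ⟨hy1, hc⟩
      have := csInf_le hTbdd hmem
      rw [← hx₀] at this
      linarith
    -- V is monotone on [1, x₀]
    have hVcont : ContinuousOn (cmpV C ε α v1) (Set.Icc 1 x₀) := fun y hy =>
      ((hasDerivAt_cmpV (v2 := v2) hv1 (lt_of_lt_of_le one_pos hy.1)).continuousAt).continuousWithinAt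
    have hVmono : MonotoneOn (cmpV C ε α v1) (Set.Icc 1 x₀) := by
      apply monotoneOn_of_deriv_nonneg (convex_Icc 1 x₀) hVcont
      · intro y hy
        rw [interior_Icc] at hy
        exact ((hasDerivAt_cmpV (v2 := v2) hv1 (by linarith [hy.1]))).differentiableAt.differentiableWithinAt
      · intro y hy
        rw [interior_Icc] at hy
        have hy0 : (0:ℝ) < y := by linarith [hy.1]
        rw [(hasDerivAt_cmpV (C := C) (ε := ε) (v2 := v2) hv1 hy0).deriv]
        have hsup' := cmp_supersolution (v := v) (v1 := v1) hα hC0 hε hode hy.1.le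
        have hwy := (hwpos y hy.1.le hy.2).le
        have hρ : (0:ℝ) ≤ α * (α-1) := by nlinarith
        nlinarith [mul_nonneg hρ hwy]
    have hVpos : ∀ y ∈ Set.Icc 1 x₀, 0 < cmpV C ε α v1 y := by
      intro y hy
      have h1V : cmpV C ε α v1 1 ≤ cmpV C ε α v1 y :=
        hVmono (Set.left_mem_Icc.2 hx₀1) hy hy.1
      have h1 : 0 < cmpV C ε α v1 1 := by
        rw [cmpV]; nlinarith [hw1pos]
      linarith
    have hWmono : StrictMonoOn (cmpW C ε α v) (Set.Icc 1 x₀) := by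
      apply strictMonoOn_of_deriv_pos (convex_Icc 1 x₀)
      · exact fun y hy =>
          ((hasDerivAt_cmpW hv (lt_of_lt_of_le one_pos hy.1)).continuousAt).continuousWithinAt
      · intro y hy
        rw [interior_Icc] at hy
        have hy0 : (0:ℝ) < y := by linarith [hy.1]
        rw [(hasDerivAt_cmpW hv hy0).deriv]
        have hVy := hVpos y ⟨hy.1.le, hy.2.le⟩
        rw [cmpV] at hVy
        nlinarith [hVy, sq_nonneg y]
    have hfinal := hWmono (Set.left_mem_Icc.2 hx₀1) (Set.right_mem_Icc.2 hx₀1) hx₀gt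
    have hlast := hx₀T.2
    linarith
  intro x hx
  by_contra hcon
  push_neg at hcon
  have hx0 : (0:ℝ) < x := lt_of_lt_of_le one_pos hx
  have hxpow : 0 < x ^ α := Real.rpow_pos_of_pos hx0 _
  set ε := (v x - C * x ^ (α-1)) / (2 * x ^ α) with hεdef
  have hεpos : 0 < ε := by
    apply div_pos; linarith; linarith
  have hm := main ε hεpos x hx
  rw [cmpW, hεdef] at hm
  have h2 : (v x - C * x ^ (α-1)) / (2 * x ^ α) * x ^ α = (v x - C * x ^ (α-1))/2 := by
    field_simp
  rw [h2] at hm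
  linarith

end Compare

section Components
variable {α : ℝ} {v v1 v2 : ℝ → ℝ} {C : ℝ}

lemma ode_compare_abs (hα : 2 ≤ α) (hv : ∀ x, HasDerivAt v (v1 x) x)
    (hv1 : ∀ x, HasDerivAt v1 (v2 x) x)
    (hode : ∀ x, (1 + x^2) * v2 x + 2*x*v1 x = α*(α-1) * v x)
    (hC1 : |v 1| ≤ C) (hC2 : |v1 1| ≤ C * (α - 1)) :
    ∀ x, 1 ≤ x → |v x| ≤ C * x ^ (α - 1) := by
  intro x hx
  rw [abs_le]
  constructor
  · have hneg := ode_compare (v := fun x => -v x) (v1 := fun x => -v1 x)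
      (v2 := fun x => -v2 x) hα (fun x => (hv x).neg) (fun x => (hv1 x).neg)
      (fun x => by have := hode x; linarith)
      (by simpa using hC1) (by simpa using hC2) x hx
    linarith
  · exact ode_compare hα hv hv1 hode hC1 hC2 x hx

lemma component_bound (hα : 2 ≤ α) (hv : ∀ x, HasDerivAt v (v1 x) x)
    (hv1 : ∀ x, HasDerivAt v1 (v2 x) x)
    (hode : ∀ x, (1 + x^2) * v2 x + 2*x*v1 x = α*(α-1) * v x) :
    ∃ Cc, 0 < Cc ∧ ∀ x : ℝ, 1 ≤ |x| → |v x| ≤ Cc * |x| ^ (α - 1) := by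
  have hα1 : (0:ℝ) < α - 1 := by linarith
  set C1 : ℝ := max (|v 1|) (|v1 1| / (α-1)) with hC1def
  set C2 : ℝ := max (|v (-1)|) (|v1 (-1)| / (α-1)) with hC2def
  refine ⟨C1 + C2 + 1, by positivity, ?_⟩
  have hC1a : |v 1| ≤ C1 := le_max_left _ _
  have hC1b : |v1 1| ≤ C1 * (α - 1) := by
    rw [← div_le_iff₀ hα1]; exact le_max_right _ _
  have hpos : ∀ x, 1 ≤ x → |v x| ≤ C1 * x ^ (α-1) :=
    ode_compare_abs hα hv hv1 hode hC1a hC1b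
  -- reflected solution
  have hvneg : ∀ x, HasDerivAt (fun x => v (-x)) (-v1 (-x)) x := by
    intro x
    have := (hv (-x)).comp x (hasDerivAt_neg x)
    exact this.congr_deriv (by ring)
  have hv1neg : ∀ x, HasDerivAt (fun x => -v1 (-x)) (v2 (-x)) x := by
    intro x
    have := ((hv1 (-x)).comp x (hasDerivAt_neg x)).neg
    exact this.congr_deriv (by ring)
  have hodeneg : ∀ x, (1 + x^2) * (v2 (-x)) + 2*x*(-v1 (-x)) = α*(α-1) * (v (-x)) := by
    intro x
    have := hode (-x)
    have h2 : (-x)^2 = x^2 := by ring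
    rw [h2] at this
    linarith
  have hC2a : |v (-1)| ≤ C2 := le_max_left _ _
  have hC2b : |v1 (-1)| ≤ C2 * (α - 1) := by
    rw [← div_le_iff₀ hα1]; exact le_max_right _ _
  have hneg : ∀ x, 1 ≤ x → |v (-x)| ≤ C2 * x ^ (α-1) := by
    have := ode_compare_abs (v := fun x => v (-x)) (v1 := fun x => -v1 (-x))
      (v2 := fun x => v2 (-x)) hα hvneg hv1neg hodeneg
      (by simpa using hC2a) (by simpa using hC2b)
    simpa using this
  intro x hx
  have hC1pos : 0 ≤ C1 := le_trans (abs_nonneg _) hC1a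
  have hC2pos : 0 ≤ C2 := le_trans (abs_nonneg _) hC2a
  have hrp : (0:ℝ) ≤ |x| ^ (α-1) := Real.rpow_nonneg (abs_nonneg x) _
  rcases le_or_gt 1 x with h | h
  · have : |x| = x := abs_of_nonneg (by linarith)
    rw [this]
    calc |v x| ≤ C1 * x ^ (α-1) := hpos x h
      _ ≤ (C1 + C2 + 1) * x ^ (α-1) := by
          have : (0:ℝ) ≤ x ^ (α-1) := Real.rpow_nonneg (by linarith) _
          nlinarith
  · have h1 : 1 ≤ -x := by
      rcases le_or_gt 0 x with h0 | h0
      · rw [abs_of_nonneg h0] at hx; linarith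
      · rwa [abs_of_neg h0] at hx
    have habs : |x| = -x := abs_of_neg (by linarith)
    have := hneg (-x) h1
    rw [neg_neg] at this
    rw [habs]
    calc |v x| ≤ C2 * (-x) ^ (α-1) := this
      _ ≤ (C1 + C2 + 1) * (-x) ^ (α-1) := by
          have : (0:ℝ) ≤ (-x) ^ (α-1) := Real.rpow_nonneg (by linarith) _
          nlinarith

end Components

section Global
variable {α : ℝ} {f : ℂ → ℂ}

lemma ode_line_re (hα : 2 ≤ α) (hf : IsTwoF1 ((1 - α : ℝ) : ℂ) (α : ℂ) 1 f) (x : ℝ) :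
    (1 + x^2) * (uu2 f x).re + 2*x*(uu1 f x).re = α*(α-1) * (uu f x).re := by
  have h := congrArg Complex.re (ode_line hα hf x)
  simp only [Complex.add_re, Complex.re_ofReal_mul] at h
  exact h

lemma ode_line_im (hα : 2 ≤ α) (hf : IsTwoF1 ((1 - α : ℝ) : ℂ) (α : ℂ) 1 f) (x : ℝ) :
    (1 + x^2) * (uu2 f x).im + 2*x*(uu1 f x).im = α*(α-1) * (uu f x).im := by
  have h := congrArg Complex.im (ode_line hα hf x)
  simp only [Complex.add_im, Complex.im_ofReal_mul] at h
  exact h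

lemma hasDerivAt_uu_re (hf : IsTwoF1 ((1 - α : ℝ) : ℂ) (α : ℂ) 1 f) (x : ℝ) :
    HasDerivAt (fun x => (uu f x).re) ((uu1 f x).re) x :=
  (Complex.reCLM.hasFDerivAt.comp_hasDerivAt x (hasDerivAt_uu hf x))

lemma hasDerivAt_uu1_re (hf : IsTwoF1 ((1 - α : ℝ) : ℂ) (α : ℂ) 1 f) (x : ℝ) :
    HasDerivAt (fun x => (uu1 f x).re) ((uu2 f x).re) x :=
  (Complex.reCLM.hasFDerivAt.comp_hasDerivAt x (hasDerivAt_uu1 hf x))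

lemma hasDerivAt_uu_im (hf : IsTwoF1 ((1 - α : ℝ) : ℂ) (α : ℂ) 1 f) (x : ℝ) :
    HasDerivAt (fun x => (uu f x).im) ((uu1 f x).im) x :=
  (Complex.imCLM.hasFDerivAt.comp_hasDerivAt x (hasDerivAt_uu hf x))

lemma hasDerivAt_uu1_im (hf : IsTwoF1 ((1 - α : ℝ) : ℂ) (α : ℂ) 1 f) (x : ℝ) :
    HasDerivAt (fun x => (uu1 f x).im) ((uu2 f x).im) x :=
  (Complex.imCLM.hasFDerivAt.comp_hasDerivAt x (hasDerivAt_uu1 hf x))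

lemma uu_bound (hα : 2 ≤ α) (hf : IsTwoF1 ((1 - α : ℝ) : ℂ) (α : ℂ) 1 f) :
    ∃ Cu, 0 < Cu ∧ ∀ x : ℝ, ‖uu f x‖ ≤ Cu * (1 + |x|) ^ (α - 1) := by
  have hα1 : (0:ℝ) ≤ α - 1 := by linarith
  obtain ⟨CR, hCRpos, hCR⟩ := component_bound (v := fun x => (uu f x).re)
    (v1 := fun x => (uu1 f x).re) (v2 := fun x => (uu2 f x).re) hα
    (hasDerivAt_uu_re hf) (hasDerivAt_uu1_re hf) (ode_line_re hα hf)
  obtain ⟨CI, hCIpos, hCI⟩ := component_bound (v := fun x => (uu f x).im)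
    (v1 := fun x => (uu1 f x).im) (v2 := fun x => (uu2 f x).im) hα
    (hasDerivAt_uu_im hf) (hasDerivAt_uu1_im hf) (ode_line_im hα hf)
  have hcont : ContinuousOn (uu f) (Set.Icc (-1:ℝ) 1) := fun y _ =>
    ((hasDerivAt_uu hf y).continuousAt).continuousWithinAt
  obtain ⟨Mc, hMc⟩ := isCompact_Icc.exists_bound_of_continuousOn hcont
  refine ⟨CR + CI + |Mc| + 1, by positivity, ?_⟩
  intro x
  have hb : (1:ℝ) ≤ 1 + |x| := by linarith [abs_nonneg x]
  have hrp1 : (1:ℝ) ≤ (1 + |x|) ^ (α-1) := Real.one_le_rpow hb hα1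
  have hrpnn : (0:ℝ) ≤ (1 + |x|) ^ (α-1) := by linarith
  rcases le_or_gt 1 (|x|) with h | h
  · have h1 := hCR x h
    have h2 := hCI x h
    have habs : ‖uu f x‖ ≤ |(uu f x).re| + |(uu f x).im| :=
      Complex.norm_le_abs_re_add_abs_im _
    have hmono : |x| ^ (α-1) ≤ (1 + |x|) ^ (α-1) :=
      Real.rpow_le_rpow (abs_nonneg x) (by linarith) hα1
    have hMcabs : (0:ℝ) ≤ |Mc| := abs_nonneg Mc
    calc ‖uu f x‖ ≤ |(uu f x).re| + |(uu f x).im| := habs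
      _ ≤ CR * |x| ^ (α-1) + CI * |x| ^ (α-1) := by linarith
      _ ≤ (CR + CI) * (1 + |x|) ^ (α-1) := by nlinarith [Real.rpow_nonneg (abs_nonneg x) (α-1)]
      _ ≤ (CR + CI + |Mc| + 1) * (1 + |x|) ^ (α-1) := by nlinarith
  · have hx : x ∈ Set.Icc (-1:ℝ) 1 := by
      constructor <;> [linarith [neg_abs_le x]; linarith [le_abs_self x]]
    have := hMc x hx
    calc ‖uu f x‖ = ‖uu f x‖ := rfl
      _ ≤ Mc := this
      _ ≤ |Mc| := le_abs_self Mc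
      _ ≤ (CR + CI + |Mc| + 1) * 1 := by nlinarith
      _ ≤ (CR + CI + |Mc| + 1) * (1 + |x|) ^ (α-1) := by
          have hm := mul_le_mul_of_nonneg_left hrp1 (by positivity : (0:ℝ) ≤ CR + CI + |Mc| + 1)
          linarith

end Global


/-- For `α ≥ 2`, `h_f` is continuous on `(0, π)` and satisfies
`|h_f(θ)| ≤ C sin^{α-1} θ` there. -/
theorem hf_continuous_and_bounded (α : ℝ) (hα : 2 ≤ α) (f : ℂ → ℂ)
    (hf : IsTwoF1 ((1 - α : ℝ) : ℂ) (α : ℂ) 1 f) :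
    ContinuousOn (hF α f) (Set.Ioo 0 Real.pi) ∧
    ∃ C > 0, ∀ θ ∈ Set.Ioo (0:ℝ) Real.pi, |hF α f θ| ≤ C * Real.sin θ ^ (α - 1) := by
  have hα1 : (0:ℝ) ≤ α - 1 := by linarith
  constructor
  · -- continuity
    intro θ hθ
    obtain ⟨hθ1, hθ2⟩ := hθ
    have hs : 0 < Real.sin θ := Real.sin_pos_of_pos_of_lt_pi hθ1 hθ2
    apply ContinuousAt.continuousWithinAt
    refine ContinuousAt.mul (ContinuousAt.mul continuousAt_const ?_) ?_
    · exact (Real.continuous_sin.continuousAt).rpow_const (Or.inl hs.ne')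
    · -- the re part
      have hsC : ((Real.sin θ : ℂ)) ≠ 0 := Complex.ofReal_ne_zero.2 hs.ne'
      have hz : ContinuousAt (fun x : ℝ =>
          ((1 : ℂ) - Complex.I * ((Real.cos x : ℂ) / (Real.sin x : ℂ))) / 2) θ := by
        refine ContinuousAt.div_const ?_ 2
        refine ContinuousAt.sub continuousAt_const (ContinuousAt.mul continuousAt_const ?_)
        exact ContinuousAt.div
          ((Complex.continuous_ofReal.comp Real.continuous_cos).continuousAt)
          ((Complex.continuous_ofReal.comp Real.continuous_sin).continuousAt) hsC
      have hzpt : ((1 : ℂ) - Complex.I * ((Real.cos θ : ℂ) / (Real.sin θ : ℂ))) / 2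
          = zx (Real.cos θ / Real.sin θ) := by
        rw [zx, Complex.ofReal_div]
      have hfc : ContinuousAt f
          (((1 : ℂ) - Complex.I * ((Real.cos θ : ℂ) / (Real.sin θ : ℂ))) / 2) := by
        rw [hzpt]
        exact (hf.1.differentiableAt
          (isOpen_cutPlane.mem_nhds (zx_mem (Real.cos θ / Real.sin θ)))).continuousAt
      have hfz : ContinuousAt (fun x : ℝ =>
          f (((1 : ℂ) - Complex.I * ((Real.cos x : ℂ) / (Real.sin x : ℂ))) / 2)) θ :=
        ContinuousAt.comp (x := θ) hfc hz
      exact Complex.continuous_re.continuousAt.comp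
        (ContinuousAt.mul continuousAt_const hfz)
  · -- boundedness
    obtain ⟨Cu, hCu, hub⟩ := uu_bound hα hf
    set K : ℝ := 2 ^ (α + 1) * Real.pi / chat α * Real.sin (Real.pi * α / 2) with hK
    refine ⟨|K| * Cu * 2 ^ (α - 1) + 1, by positivity, ?_⟩
    intro θ hθ
    obtain ⟨hθ1, hθ2⟩ := hθ
    have hs : 0 < Real.sin θ := Real.sin_pos_of_pos_of_lt_pi hθ1 hθ2
    have hs1 : Real.sin θ ≤ 1 := Real.sin_le_one θ
    set x : ℝ := Real.cos θ / Real.sin θ with hxdef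
    -- |Re(phase * f z)| ≤ |uu f x|
    have hphase : ‖Complex.exp (-(Real.pi : ℂ) * α / 2 * Complex.I)‖ = 1 := by
      rw [Complex.norm_exp]
      have : (-(Real.pi : ℂ) * α / 2 * Complex.I).re = 0 := by simp
      rw [this, Real.exp_zero]
    have habs1 : |(Complex.exp (-(Real.pi : ℂ) * α / 2 * Complex.I) *
        f ((1 - Complex.I * ((Real.cos θ / Real.sin θ : ℝ) : ℂ)) / 2)).re|
        ≤ ‖uu f x‖ := by
      calc |(Complex.exp (-(Real.pi : ℂ) * α / 2 * Complex.I) *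
          f ((1 - Complex.I * ((Real.cos θ / Real.sin θ : ℝ) : ℂ)) / 2)).re|
          ≤ ‖Complex.exp (-(Real.pi : ℂ) * α / 2 * Complex.I) *
            f ((1 - Complex.I * ((Real.cos θ / Real.sin θ : ℝ) : ℂ)) / 2)‖ :=
            Complex.abs_re_le_norm _
        _ = ‖Complex.exp (-(Real.pi : ℂ) * α / 2 * Complex.I)‖ *
            ‖f ((1 - Complex.I * ((Real.cos θ / Real.sin θ : ℝ) : ℂ)) / 2)‖ :=
            norm_mul _ _
        _ = ‖uu f x‖ := by rw [hphase, one_mul]; rfl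
    -- core rpow estimate
    have hsx : Real.sin θ * (1 + |x|) ≤ 2 := by
      have h1 : Real.sin θ * |x| = |Real.cos θ| := by
        rw [hxdef, abs_div, abs_of_pos hs]
        field_simp
      have h2 : |Real.cos θ| ≤ 1 := Real.abs_cos_le_one θ
      nlinarith
    have hcore : Real.sin θ ^ (2*α - 2) * (1 + |x|) ^ (α-1)
        ≤ 2 ^ (α-1) * Real.sin θ ^ (α-1) := by
      have e : Real.sin θ ^ (2*α - 2) * (1 + |x|) ^ (α-1)
          = Real.sin θ ^ (α-1) * (Real.sin θ * (1 + |x|)) ^ (α-1) := by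
        rw [Real.mul_rpow hs.le (by positivity : (0:ℝ) ≤ 1 + |x|), ← mul_assoc,
          ← Real.rpow_add hs, show α - 1 + (α - 1) = 2*α - 2 by ring]
      rw [e]
      have hb : (Real.sin θ * (1 + |x|)) ^ (α-1) ≤ 2 ^ (α-1) :=
        Real.rpow_le_rpow (by positivity) hsx hα1
      have hsp : (0:ℝ) ≤ Real.sin θ ^ (α-1) := Real.rpow_nonneg hs.le _
      calc Real.sin θ ^ (α-1) * (Real.sin θ * (1 + |x|)) ^ (α-1)
          ≤ Real.sin θ ^ (α-1) * 2 ^ (α-1) := mul_le_mul_of_nonneg_left hb hsp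
        _ = 2 ^ (α-1) * Real.sin θ ^ (α-1) := by ring
    -- assemble
    have hFeq : hF α f θ = K * (Real.sin θ ^ (2*α - 2) *
        (Complex.exp (-(Real.pi : ℂ) * α / 2 * Complex.I) *
          f ((1 - Complex.I * ((Real.cos θ / Real.sin θ : ℝ) : ℂ)) / 2)).re) := by
      rw [hF, hK]; push_cast; ring
    have hsp2 : (0:ℝ) ≤ Real.sin θ ^ (2*α-2) := Real.rpow_nonneg hs.le _
    rw [hFeq, abs_mul, abs_mul (Real.sin θ ^ (2*α - 2)), abs_of_nonneg hsp2]
    have hu := hub x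
    have hKnn : (0:ℝ) ≤ |K| := abs_nonneg K
    have hrp : (0:ℝ) ≤ (1 + |x|) ^ (α-1) := Real.rpow_nonneg (by positivity) _
    calc |K| * (Real.sin θ ^ (2*α-2) * |(Complex.exp (-(Real.pi : ℂ) * α / 2 * Complex.I) *
          f ((1 - Complex.I * ((Real.cos θ / Real.sin θ : ℝ) : ℂ)) / 2)).re|)
        ≤ |K| * (Real.sin θ ^ (2*α-2) * (Cu * (1 + |x|) ^ (α-1))) := by
          refine mul_le_mul_of_nonneg_left (mul_le_mul_of_nonneg_left ?_ hsp2) hKnn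
          exact le_trans habs1 hu
      _ = |K| * Cu * (Real.sin θ ^ (2*α-2) * (1 + |x|) ^ (α-1)) := by ring
      _ ≤ |K| * Cu * (2 ^ (α-1) * Real.sin θ ^ (α-1)) := by
          refine mul_le_mul_of_nonneg_left hcore (by positivity)
      _ = |K| * Cu * 2 ^ (α-1) * Real.sin θ ^ (α-1) := by ring
      _ ≤ (|K| * Cu * 2 ^ (α-1) + 1) * Real.sin θ ^ (α-1) := by
          have : (0:ℝ) ≤ Real.sin θ ^ (α-1) := Real.rpow_nonneg hs.le _
          nlinarith
end
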